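/- arXiv:1509.04374 — 8 statements merged into one kernel-verified Lean document; each statement's English description precedes it below -/
import Mathlib

section
/- Let R be a Noetherian commutative ring and let M and N be finitely generated R-modules with N ≠ 0. Then surj_N(M) is finite, i.e., the set of natural numbers n for which there exists a surjective R-linear map M → N^{⊕n} is bounded above. -/
private lemma surjNum_finite_aux {k : Type*} [Field k] {V : Type*} [AddCommGroup V]
    [Module k V] [Module.Finite k V] [Nontrivial V] {n : ℕ} (t : Set (Fin n → V))
    [Fintype t] (ht : Submodule.span k t = ⊤) : n ≤ t.toFinset.card := by
  have h1 := finrank_span_le_card (R := k) t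
  rw [ht, finrank_top] at h1
  have hd : 1 ≤ Module.finrank k V := Module.finrank_pos
  calc n = n * 1 := (mul_one n).symm
    _ ≤ n * Module.finrank k V := Nat.mul_le_mul_left n hd
    _ = Module.finrank k (Fin n → V) := by
        rw [Module.finrank_pi_fintype]; simp [mul_comm]
    _ ≤ t.toFinset.card := h1

/-- Over a Noetherian ring, for finitely generated modules `M`, `N` with `N ≠ 0`,
the surjective number `surj_N(M)` is finite: the set of `n` such that there is a
surjective `R`-linear map `M → N^{⊕n}` is bounded above. -/
theorem surjNum_finite
    {R : Type*} [CommRing R] [IsNoetherianRing R]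
    {M N : Type*} [AddCommGroup M] [Module R M] [AddCommGroup N] [Module R N]
    [Module.Finite R M] [Module.Finite R N] (hN : Nontrivial N) :
    ∃ B : ℕ, ∀ n : ℕ,
      (∃ f : M →ₗ[R] (Fin n → N), Function.Surjective f) → n ≤ B := by
  classical
  -- the annihilator of N is a proper ideal
  have hann : Module.annihilator R N ≠ ⊤ := by
    intro h
    obtain ⟨x, hx⟩ := exists_ne (0 : N)
    have h1 : (1 : R) ∈ Module.annihilator R N := h ▸ Submodule.mem_top
    exact hx (by simpa using Module.mem_annihilator.mp h1 x)
  obtain ⟨m, hm, hle⟩ := Ideal.exists_le_maximal _ hann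
  haveI : m.IsMaximal := hm
  -- N/mN is nontrivial (Nakayama)
  have hlt : (m • ⊤ : Submodule R N) ≠ ⊤ := by
    intro h
    obtain ⟨r, hr1, hr0⟩ := Submodule.exists_sub_one_mem_and_smul_eq_zero_of_fg_of_le_smul
      m ⊤ (Module.finite_def.mp ‹_›) (by rw [h])
    have hrann : r ∈ Module.annihilator R N :=
      Module.mem_annihilator.mpr fun x => hr0 x Submodule.mem_top
    have h1 : (1 : R) ∈ m := by
      have := m.sub_mem (hle hrann) hr1
      simpa using this
    exact hm.ne_top (m.eq_top_of_isUnit_mem h1 isUnit_one)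
  haveI hNQ : Nontrivial (N ⧸ (m • ⊤ : Submodule R N)) :=
    Submodule.Quotient.nontrivial_iff.mpr (lt_top_iff_ne_top.mpr hlt).ne
  haveI : Module.Finite (R ⧸ m) (N ⧸ (m • ⊤ : Submodule R N)) :=
    Module.Finite.of_restrictScalars_finite R _ _
  -- generators of M
  obtain ⟨s, hs⟩ := Module.Finite.fg_top (R := R) (M := M)
  refine ⟨s.card, fun n ⟨f, hf⟩ => ?_⟩
  set NQ := N ⧸ (m • ⊤ : Submodule R N) with hNQdef
  let q : N →ₗ[R] NQ := (m • ⊤ : Submodule R N).mkQ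
  let g : M →ₗ[R] (Fin n → NQ) := (q.compLeft (Fin n)).comp f
  have hg : Function.Surjective g := by
    have hq : Function.Surjective q := Submodule.mkQ_surjective _
    intro y
    choose w hw using fun i => hq (y i)
    obtain ⟨z, hz⟩ := hf w
    exact ⟨z, by funext i; simp [g, LinearMap.compLeft, hz, hw i]; exact hw i⟩
  haveI : IsScalarTower R (R ⧸ m) (Fin n → NQ) := Pi.isScalarTower
  have hspanR : Submodule.span R (g '' s) = ⊤ := by
    rw [← Submodule.map_span, hs, Submodule.map_top, LinearMap.range_eq_top.mpr hg]
  have hspank : Submodule.span (R ⧸ m) ((g : M → Fin n → NQ) '' s) = ⊤ := by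
    apply Submodule.restrictScalars_injective R
    rw [Submodule.restrictScalars_span R (R ⧸ m) Ideal.Quotient.mk_surjective, hspanR]
    rfl
  haveI : Fintype ((g : M → Fin n → NQ) '' (s : Set M) : Set (Fin n → NQ)) :=
    (s.finite_toSet.image _).fintype
  letI : Field (R ⧸ m) := Ideal.Quotient.field m
  have key := surjNum_finite_aux (k := R ⧸ m) ((g : M → Fin n → NQ) '' s) hspank
  refine key.trans ?_
  rw [Set.toFinset_image]
  exact (Finset.card_image_le).trans (by simp)
end

section
/- Let R be a Noetherian commutative ring and let M and N be finitely generated R-modules with N ≠ 0. Then the limit lim_{r→∞} surj_N(M^{⊕r})/r exists; that is, there exists a real number L such that the sequence r ↦ (surj_N(M^{⊕r}) : ℝ)/r tends to L as r → ∞. -/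
set_option synthInstance.maxHeartbeats 80000


/-- The surjective number `surj_N(M)`: the largest `n` such that there is a
surjective `R`-linear map `M → N^{⊕n}` (the direct sum of `n` copies of `N`). -/
noncomputable def surjNum (R M N : Type*) [CommRing R] [AddCommGroup M] [Module R M]
    [AddCommGroup N] [Module R N] : ℕ :=
  sSup {n : ℕ | ∃ f : M →ₗ[R] (Fin n → N), Function.Surjective f}

open Module Submodule

section Bound

variable {R M N : Type*} [CommRing R] [AddCommGroup M] [Module R M]
    [AddCommGroup N] [Module R N]

/-- Key bound: if `M` is generated by `Fintype.card ι` elements and surjects onto `N^n` with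
`N` a nontrivial finitely generated module, then `n ≤ Fintype.card ι`. -/
lemma surj_bound [Module.Finite R N] (hN : Nontrivial N)
    {ι : Type*} [Fintype ι] (g : (ι → R) →ₗ[R] M) (hg : Function.Surjective g)
    {n : ℕ} (f : M →ₗ[R] (Fin n → N)) (hf : Function.Surjective f) : n ≤ Fintype.card ι := by
  classical
  -- choose a maximal ideal containing the annihilator of N
  have hann : (⊤ : Submodule R N).annihilator ≠ ⊤ := by
    intro h
    obtain ⟨x, hx⟩ := exists_ne (0 : N)
    have : (1 : R) ∈ (⊤ : Submodule R N).annihilator := h ▸ trivial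
    rw [Submodule.mem_annihilator] at this
    exact hx (by simpa using this x trivial)
  obtain ⟨m, hm, hle⟩ := Ideal.exists_le_maximal _ hann
  haveI := hm
  letI : Field (R ⧸ m) := Ideal.Quotient.field m
  -- N ⧸ mN is nontrivial (Nakayama)
  have hne : (m • ⊤ : Submodule R N) ≠ ⊤ := by
    intro h
    obtain ⟨r, hr1, hr0⟩ :=
      Submodule.exists_sub_one_mem_and_smul_eq_zero_of_fg_of_le_smul m (⊤ : Submodule R N)
        (Module.Finite.fg_top (R := R)) (by rw [h])
    have hrm : r ∈ m := hle (Submodule.mem_annihilator.2 fun x hx => hr0 x hx)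
    have : (1 : R) ∈ m := by simpa using m.sub_mem hrm hr1
    exact hm.ne_top (m.eq_top_iff_one.2 this)
  haveI : Nontrivial (N ⧸ (m • ⊤ : Submodule R N)) :=
    Submodule.Quotient.nontrivial_iff.mpr hne
  haveI : IsScalarTower R (R ⧸ m) (N ⧸ (m • ⊤ : Submodule R N)) :=
    (Module.isTorsionBySet_quotient_ideal_smul N m).isScalarTower
  haveI : IsScalarTower R (R ⧸ m) (Fin n → N ⧸ (m • ⊤ : Submodule R N)) := Pi.isScalarTower
  haveI : Module.Finite (R ⧸ m) (N ⧸ (m • ⊤ : Submodule R N)) :=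
    Module.Finite.of_restrictScalars_finite R _ _
  -- the composite surjection (ι → R) → (Fin n → Q)
  set q : (Fin n → N) →ₗ[R] (Fin n → N ⧸ (m • ⊤ : Submodule R N)) :=
    LinearMap.compLeft (m • ⊤ : Submodule R N).mkQ (Fin n)
  have hq : Function.Surjective q := (Submodule.mkQ_surjective _).comp_left
  set G : (ι → R) →ₗ[R] (Fin n → N ⧸ (m • ⊤ : Submodule R N)) := q ∘ₗ f ∘ₗ g
  have hG : Function.Surjective G := hq.comp (hf.comp hg)
  -- the images of the standard basis span (Fin n → Q) over R ⧸ m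
  set v : ι → (Fin n → N ⧸ (m • ⊤ : Submodule R N)) := fun i => G (Pi.single i 1)
  have hspan : Submodule.span (R ⧸ m) (Set.range v) = ⊤ := by
    rw [eq_top_iff]
    intro x _
    obtain ⟨w, rfl⟩ := hG x
    have hw : w = ∑ i, w i • (Pi.single i 1 : ι → R) := by
      ext j; simp [Finset.sum_apply, Pi.single_apply]
    rw [hw, map_sum]
    refine Submodule.sum_mem _ fun i _ => ?_
    rw [map_smul]
    have : w i • G (Pi.single i 1) = (Ideal.Quotient.mk m (w i)) • G (Pi.single i 1) := by
      rw [← algebraMap_smul (R ⧸ m) (w i)]; rfl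
    rw [this]
    exact Submodule.smul_mem _ _ (Submodule.subset_span ⟨i, rfl⟩)
  -- finrank bounds
  have h1 : n ≤ Module.finrank (R ⧸ m) (Fin n → N ⧸ (m • ⊤ : Submodule R N)) := by
    rw [Module.finrank_pi_fintype (R ⧸ m)]
    calc n = ∑ _i : Fin n, 1 := by simp
    _ ≤ ∑ _i : Fin n, Module.finrank (R ⧸ m) (N ⧸ (m • ⊤ : Submodule R N)) :=
        Finset.sum_le_sum fun i _ => Module.finrank_pos
  have h2 : Module.finrank (R ⧸ m) (Fin n → N ⧸ (m • ⊤ : Submodule R N)) ≤ Fintype.card ι := by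
    have hB : LinearMap.range (Fintype.linearCombination (R ⧸ m) v) = ⊤ := by
      rw [Fintype.range_linearCombination]; exact hspan
    calc Module.finrank (R ⧸ m) (Fin n → N ⧸ (m • ⊤ : Submodule R N))
        = Module.finrank (R ⧸ m)
            (⊤ : Submodule (R ⧸ m) (Fin n → N ⧸ (m • ⊤ : Submodule R N))) :=
          (finrank_top _ _).symm
      _ = Module.finrank (R ⧸ m)
            (LinearMap.range (Fintype.linearCombination (R ⧸ m) v)) := by rw [hB]
      _ ≤ Module.finrank (R ⧸ m) (ι → R ⧸ m) := LinearMap.finrank_range_le _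
      _ = Fintype.card ι := by simp [Module.finrank_pi]
  exact h1.trans h2

/-- Surjections onto `N^{n₁}` and `N^{n₂}` from `M^{r₁}`, `M^{r₂}` combine. -/
lemma surj_combine {r₁ r₂ n₁ n₂ : ℕ}
    (f₁ : (Fin r₁ → M) →ₗ[R] (Fin n₁ → N)) (h₁ : Function.Surjective f₁)
    (f₂ : (Fin r₂ → M) →ₗ[R] (Fin n₂ → N)) (h₂ : Function.Surjective f₂) :
    ∃ f : (Fin (r₁ + r₂) → M) →ₗ[R] (Fin (n₁ + n₂) → N), Function.Surjective f := by
  let eM : (Fin (r₁ + r₂) → M) ≃ₗ[R] (Fin r₁ → M) × (Fin r₂ → M) :=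
    (LinearEquiv.funCongrLeft R M finSumFinEquiv).trans
      (LinearEquiv.sumArrowLequivProdArrow _ _ R M)
  let eN : ((Fin n₁ → N) × (Fin n₂ → N)) ≃ₗ[R] (Fin (n₁ + n₂) → N) :=
    ((LinearEquiv.funCongrLeft R N (finSumFinEquiv (m := n₁) (n := n₂))).trans
      (LinearEquiv.sumArrowLequivProdArrow (Fin n₁) (Fin n₂) R N)).symm
  refine ⟨eN.toLinearMap ∘ₗ (f₁.prodMap f₂) ∘ₗ eM.toLinearMap, ?_⟩
  exact eN.surjective.comp ((h₁.prodMap h₂).comp eM.surjective)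

end Bound

/-- Over a Noetherian ring, for finitely generated modules `M`, `N` with `N ≠ 0`,
the limit `lim_{r→∞} surj_N(M^{⊕r})/r` (the asymptotic surjective number `asn_N(M)`)
exists. -/
theorem asn_exists
    {R : Type*} [CommRing R] [IsNoetherianRing R]
    {M N : Type*} [AddCommGroup M] [Module R M] [AddCommGroup N] [Module R N]
    [Module.Finite R M] [Module.Finite R N] (hN : Nontrivial N) :
    ∃ L : ℝ, Filter.Tendsto
      (fun r : ℕ => (surjNum R (Fin r → M) N : ℝ) / r) Filter.atTop (nhds L) := by
  classical
  obtain ⟨s, g, hg⟩ := Module.Finite.exists_fin' R M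
  set S : ℕ → Set ℕ :=
    fun r => {n : ℕ | ∃ f : (Fin r → M) →ₗ[R] (Fin n → N), Function.Surjective f} with hS
  set a : ℕ → ℕ := fun r => surjNum R (Fin r → M) N with ha
  have haS : ∀ r, a r = sSup (S r) := fun r => rfl
  -- for each r a surjection (Fin r × Fin s → R) → (Fin r → M)
  have hGr : ∀ r : ℕ, ∃ G : (Fin r × Fin s → R) →ₗ[R] (Fin r → M), Function.Surjective G := by
    intro r
    refine ⟨LinearMap.pi fun i => g ∘ₗ LinearMap.funLeft R R (fun j : Fin s => (i, j)), ?_⟩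
    intro y
    choose w hw using fun i => hg (y i)
    exact ⟨fun p => w p.1 p.2, funext fun i => hw i⟩
  have key : ∀ r : ℕ, ∀ n ∈ S r, n ≤ r * s := by
    intro r n hn
    obtain ⟨f, hf⟩ := hn
    obtain ⟨G, hG⟩ := hGr r
    simpa using surj_bound hN G hG f hf
  have hbdd : ∀ r, BddAbove (S r) := fun r => ⟨r * s, key r⟩
  have h0 : ∀ r, (0 : ℕ) ∈ S r :=
    fun r => ⟨0, fun y => ⟨0, Subsingleton.elim _ _⟩⟩
  have hmem : ∀ r, a r ∈ S r := fun r => Nat.sSup_mem ⟨0, h0 r⟩ (hbdd r)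
  have hle : ∀ r, a r ≤ r * s := fun r => csSup_le ⟨0, h0 r⟩ (key r)
  have hsuper : ∀ p q : ℕ, a p + a q ≤ a (p + q) := by
    intro p q
    obtain ⟨f₁, h₁⟩ := hmem p
    obtain ⟨f₂, h₂⟩ := hmem q
    obtain ⟨f, hf⟩ := surj_combine f₁ h₁ f₂ h₂
    exact le_csSup (hbdd (p + q)) ⟨f, hf⟩
  -- Fekete
  set u : ℕ → ℝ := fun n => -(a n : ℝ) with hu
  have hsub : Subadditive u := by
    intro p q
    have := hsuper p q
    simp only [hu, neg_add_rev]
    have : ((a p : ℝ) + a q) ≤ (a (p + q) : ℝ) := by exact_mod_cast this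
    linarith
  have hbddb : BddBelow (Set.range fun n : ℕ => u n / n) := by
    refine ⟨-(s : ℝ), ?_⟩
    rintro x ⟨n, rfl⟩
    rcases Nat.eq_zero_or_pos n with hn | hn
    · subst hn
      simp [hu]
    · have hns : (a n : ℝ) ≤ n * s := by exact_mod_cast hle n
      have hn' : (0 : ℝ) < n := by exact_mod_cast hn
      simp only [hu, neg_div]
      refine neg_le_neg ?_
      rw [div_le_iff₀ hn']
      linarith
  refine ⟨-hsub.lim, ?_⟩
  have ht := (hsub.tendsto_lim hbddb).neg
  refine ht.congr fun n => ?_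
  simp [hu, neg_div, ha]
end

section
/- Let R be a Noetherian commutative ring and let M and N be finitely generated R-modules with N ≠ 0. Let L be the limit of the sequence r ↦ surj_N(M^{⊕r})/r (i.e., L = asn_N(M)). Then for every natural number r ≥ 1 one has the inequalities surj_N(M) ≤ surj_N(M^{⊕r})/r ≤ L; that is, r · surj_N(M) ≤ surj_N(M^{⊕r}) and (surj_N(M^{⊕r}) : ℝ) ≤ r · L. -/
open Module Submodule

section Bdd
variable {R M N : Type*} [CommRing R] [AddCommGroup M] [Module R M]
  [AddCommGroup N] [Module R N]

lemma surjSet_bddAbove [Module.Finite R M] [Module.Finite R N] [Nontrivial N] :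
    BddAbove {n : ℕ | ∃ f : M →ₗ[R] (Fin n → N), Function.Surjective f} := by
  have hann : Module.annihilator R N ≠ ⊤ := by
    intro h
    obtain ⟨x, hx⟩ := exists_ne (0 : N)
    have : (1:R) ∈ Module.annihilator R N := h ▸ Submodule.mem_top
    exact hx (by simpa using Module.mem_annihilator.mp this x)
  obtain ⟨m, hm, hle⟩ := Ideal.exists_le_maximal _ hann
  haveI := hm
  set V := N ⧸ (m • ⊤ : Submodule R N) with hV
  -- V is nontrivial
  haveI hVnt : Nontrivial V := by
    refine Submodule.Quotient.nontrivial_iff.mpr ?_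
    intro htop
    obtain ⟨r, hr1, hr0⟩ := Submodule.exists_sub_one_mem_and_smul_eq_zero_of_fg_of_le_smul
      m ⊤ (Module.finite_def.mp ‹Module.Finite R N›) (le_of_eq htop.symm)
    have hrann : r ∈ Module.annihilator R N :=
      Module.mem_annihilator.mpr fun x => hr0 x Submodule.mem_top
    have : (1:R) ∈ m := by
      have := m.sub_mem (hle hrann) hr1
      simpa using this
    exact hm.ne_top (Ideal.eq_top_of_isUnit_mem _ this isUnit_one)
  letI : Field (R ⧸ m) := Ideal.Quotient.field m
  haveI : Module.Finite R V := Module.Finite.quotient R _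
  haveI : Module.Finite (R ⧸ m) V := Module.Finite.of_restrictScalars_finite R (R ⧸ m) V
  haveI hTower : IsScalarTower R (R ⧸ m) V := inferInstance
  haveI : ∀ n : ℕ, IsScalarTower R (R ⧸ m) (Fin n → V) := fun n => Pi.isScalarTower
  -- generators of M
  obtain ⟨t, v, hv⟩ := Module.Finite.exists_fin (R := R) (M := M)
  refine ⟨t, fun n hn => ?_⟩
  obtain ⟨f, hf⟩ := hn
  -- the composite surjection onto (Fin n → V)
  let q : (Fin n → N) →ₗ[R] (Fin n → V) :=
    LinearMap.pi fun i => (m • ⊤ : Submodule R N).mkQ.comp (LinearMap.proj i)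
  have hq : Function.Surjective q := by
    intro y
    choose x hx using fun i => (m • ⊤ : Submodule R N).mkQ_surjective (y i)
    exact ⟨x, funext hx⟩
  let g := q.comp f
  have hg : Function.Surjective g := hq.comp hf
  -- spanning set for Fin n → V over R, hence over R ⧸ m
  have hspanR : span R (Set.range (g ∘ v)) = ⊤ := by
    rw [Set.range_comp, ← Submodule.map_span, hv, Submodule.map_top,
      LinearMap.range_eq_top.mpr hg]
  have hspank : span (R ⧸ m) (Set.range (g ∘ v)) = ⊤ := by
    rw [← top_le_iff]
    calc (⊤ : Submodule R (Fin n → V)) = span R (Set.range (g ∘ v)) := hspanR.symm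
      _ ≤ Submodule.restrictScalars R (span (R ⧸ m) (Set.range (g ∘ v))) :=
          Submodule.span_le_restrictScalars R (R ⧸ m) _
  have hfr : finrank (R ⧸ m) (Fin n → V) ≤ t :=
    by simpa using finrank_le_of_span_eq_top hspank
  have hpos : 0 < finrank (R ⧸ m) V := Module.finrank_pos
  have hfr2 : finrank (R ⧸ m) (Fin n → V) = n * finrank (R ⧸ m) V := by
    simp [Module.finrank_pi_fintype]
  calc n = n * 1 := (mul_one n).symm
    _ ≤ n * finrank (R ⧸ m) V := Nat.mul_le_mul_left n hpos
    _ = finrank (R ⧸ m) (Fin n → V) := hfr2.symm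
    _ ≤ t := hfr

end Bdd

section Lemmas
variable {R M M' N : Type*} [CommRing R] [AddCommGroup M] [Module R M]
  [AddCommGroup M'] [Module R M'] [AddCommGroup N] [Module R N]

lemma zero_mem_surjSet :
    0 ∈ {n : ℕ | ∃ f : M →ₗ[R] (Fin n → N), Function.Surjective f} :=
  ⟨0, fun _ => ⟨0, Subsingleton.elim _ _⟩⟩

lemma surjNum_congr (e : M ≃ₗ[R] M') : surjNum R M N = surjNum R M' N := by
  unfold surjNum
  congr 1
  ext n
  exact ⟨fun ⟨f, hf⟩ => ⟨f.comp (e.symm : M' →ₗ[R] M), hf.comp e.symm.surjective⟩,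
    fun ⟨f, hf⟩ => ⟨f.comp (e : M →ₗ[R] M'), hf.comp e.surjective⟩⟩

/-- The uncurrying linear equivalence. -/
noncomputable def uncurryEquiv (R X : Type*) [CommRing R] [AddCommGroup X] [Module R X]
    (a b : ℕ) : (Fin (a * b) → X) ≃ₗ[R] (Fin a → Fin b → X) :=
  (LinearEquiv.funCongrLeft R X finProdFinEquiv).trans (LinearEquiv.curry R X (Fin a) (Fin b))

lemma mul_surjNum_le [Module.Finite R M] [Module.Finite R N] [Nontrivial N] (r : ℕ) :
    r * surjNum R M N ≤ surjNum R (Fin r → M) N := by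
  set n := surjNum R M N with hn
  have hmem : n ∈ {k : ℕ | ∃ f : M →ₗ[R] (Fin k → N), Function.Surjective f} :=
    Nat.sSup_mem ⟨0, zero_mem_surjSet⟩ surjSet_bddAbove
  obtain ⟨f, hf⟩ := hmem
  let g : (Fin r → M) →ₗ[R] (Fin r → Fin n → N) :=
    LinearMap.pi fun i => f.comp (LinearMap.proj i)
  have hg : Function.Surjective g := by
    intro y
    choose x hx using fun i => hf (y i)
    exact ⟨x, funext hx⟩
  have hmem2 : r * n ∈ {k : ℕ | ∃ f : (Fin r → M) →ₗ[R] (Fin k → N), Function.Surjective f} :=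
    ⟨((uncurryEquiv R N r n).symm : (Fin r → Fin n → N) →ₗ[R] (Fin (r * n) → N)).comp g,
      (uncurryEquiv R N r n).symm.surjective.comp hg⟩
  exact le_csSup surjSet_bddAbove hmem2

end Lemmas

/-- If `L = asn_N(M)` is the limit of `surj_N(M^{⊕r})/r`, then for every `r ≥ 1`
one has `surj_N(M) ≤ surj_N(M^{⊕r})/r ≤ L`, i.e. `r · surj_N(M) ≤ surj_N(M^{⊕r})`
and `surj_N(M^{⊕r}) ≤ r · L`. -/
theorem surjNum_le_nsurj_le_asn
    {R : Type*} [CommRing R] [IsNoetherianRing R]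
    {M N : Type*} [AddCommGroup M] [Module R M] [AddCommGroup N] [Module R N]
    [Module.Finite R M] [Module.Finite R N] (hN : Nontrivial N)
    (L : ℝ)
    (hL : Filter.Tendsto
      (fun r : ℕ => (surjNum R (Fin r → M) N : ℝ) / r) Filter.atTop (nhds L))
    (r : ℕ) (hr : 1 ≤ r) :
    r * surjNum R M N ≤ surjNum R (Fin r → M) N ∧
      (surjNum R (Fin r → M) N : ℝ) ≤ r * L := by
  haveI := hN
  constructor
  · exact mul_surjNum_le r
  · set a : ℕ → ℕ := fun k => surjNum R (Fin k → M) N with ha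
    have key : ∀ k : ℕ, k * a r ≤ a (k * r) := by
      intro k
      calc k * a r ≤ surjNum R (Fin k → Fin r → M) N := mul_surjNum_le k
        _ = a (k * r) := surjNum_congr (N := N) (uncurryEquiv R M k r).symm
    have hmul : Filter.Tendsto (fun k : ℕ => k * r) Filter.atTop Filter.atTop :=
      Filter.tendsto_atTop_atTop.mpr fun b =>
        ⟨b, fun k hk => le_trans hk (Nat.le_mul_of_pos_right k (by omega))⟩
    have T : Filter.Tendsto (fun k : ℕ => (a (k * r) : ℝ) / (k * r : ℕ))
        Filter.atTop (nhds L) := hL.comp hmul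
    have hle : (a r : ℝ) / r ≤ L := by
      refine ge_of_tendsto T (Filter.eventually_atTop.mpr ⟨1, fun k hk => ?_⟩)
      have hkey := key k
      have hk0 : (0:ℝ) < k := by exact_mod_cast hk
      have hr0 : (0:ℝ) < r := by exact_mod_cast hr
      rw [div_le_div_iff₀ hr0 (by push_cast; positivity)]
      have : (k : ℝ) * a r ≤ a (k * r) := by exact_mod_cast hkey
      push_cast
      nlinarith [Nat.cast_nonneg (α := ℝ) (a r)]
    have hr0 : (0:ℝ) < r := by exact_mod_cast hr
    calc (a r : ℝ) = (a r / r) * r := by field_simp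
      _ ≤ L * r := by exact mul_le_mul_of_nonneg_right hle hr0.le
      _ = r * L := mul_comm _ _
end

section
/- Let R be a Noetherian commutative ring and let M, M', N be finitely generated R-modules with N ≠ 0. Then asn_N(M) + asn_N(M') ≤ asn_N(M ⊕ M'); that is, if L, L' and L'' are the limits of the sequences r ↦ surj_N(M^{⊕r})/r, r ↦ surj_N(M'^{⊕r})/r and r ↦ surj_N((M ⊕ M')^{⊕r})/r respectively, then L + L' ≤ L''. -/
open Function Submodule


section aux
variable {R : Type*} [CommRing R]

/-- Existence of a maximal ideal `m` with `m • ⊤ ≠ ⊤` for a nontrivial f.g. module. -/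
lemma exists_maximal_smul_ne_top (N : Type*) [AddCommGroup N] [Module R N]
    [Module.Finite R N] [Nontrivial N] :
    ∃ m : Ideal R, m.IsMaximal ∧ (m • ⊤ : Submodule R N) ≠ ⊤ := by
  obtain ⟨x, hx⟩ := exists_ne (0 : N)
  have hann : (⊤ : Submodule R N).annihilator ≠ ⊤ := by
    intro h
    have : (1 : R) ∈ (⊤ : Submodule R N).annihilator := h ▸ trivial
    rw [Submodule.mem_annihilator] at this
    exact hx (by simpa using this x trivial)
  obtain ⟨m, hm, hle⟩ := Ideal.exists_le_maximal _ hann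
  refine ⟨m, hm, fun h => ?_⟩
  obtain ⟨r, hr1, hr0⟩ := Submodule.exists_sub_one_mem_and_smul_eq_zero_of_fg_of_le_smul m
    (⊤ : Submodule R N) (Module.Finite.fg_top) (by rw [h])
  have hrm : r ∈ m := by
    apply hle
    rw [Submodule.mem_annihilator]
    exact fun n _ => hr0 n trivial
  have : (1 : R) ∈ m := by simpa using m.sub_mem hrm hr1
  exact hm.ne_top (m.eq_top_of_isUnit_mem this isUnit_one)

/-- If `m • ⊤ ≠ ⊤` for a maximal ideal `m`, there is an `R`-linear surjection `N → R ⧸ m`. -/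
lemma exists_surjective_to_quotient {N : Type*} [AddCommGroup N] [Module R N]
    {m : Ideal R} (hm : m.IsMaximal) (h : (m • ⊤ : Submodule R N) ≠ ⊤) :
    ∃ φ : N →ₗ[R] (R ⧸ m), Surjective φ := by
  letI : Field (R ⧸ m) := Ideal.Quotient.field m
  set V := N ⧸ (m • ⊤ : Submodule R N)
  haveI : Nontrivial V := Submodule.Quotient.nontrivial_iff.mpr h
  obtain ⟨v, hv⟩ := exists_ne (0 : V)
  -- a (R ⧸ m)-linear functional on V taking value 1 at v
  letI : Module.Free (R ⧸ m) V := Module.Free.of_divisionRing _ _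
  let b := Module.Free.chooseBasis (R ⧸ m) V
  haveI : Nonempty (Module.Free.ChooseBasisIndex (R ⧸ m) V) := b.index_nonempty
  obtain ⟨i⟩ := ‹Nonempty (Module.Free.ChooseBasisIndex (R ⧸ m) V)›
  let ψ : V →ₗ[R ⧸ m] (R ⧸ m) := b.coord i
  have hψ : ψ (b i) = 1 := by simp [ψ]
  -- turn ψ into an R-linear map
  let φ0 : V →ₗ[R] (R ⧸ m) :=
    { toFun := ψ
      map_add' := fun x y => ψ.map_add x y
      map_smul' := fun r x => by
        have h1 : r • x = (Ideal.Quotient.mk m r) • x := rfl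
        have h2 : r • ψ x = (Ideal.Quotient.mk m r) • ψ x := rfl
        show ψ (r • x) = r • ψ x
        rw [h1, ψ.map_smul]; exact h2.symm }
  refine ⟨φ0 ∘ₗ (m • ⊤ : Submodule R N).mkQ, ?_⟩
  rw [LinearMap.coe_comp]
  apply Surjective.comp ?_ (Submodule.mkQ_surjective _)
  intro c
  refine ⟨c • b i, ?_⟩
  show ψ (c • b i) = c
  rw [ψ.map_smul, hψ, smul_eq_mul, mul_one]

lemma bddAbove_surjSet (P N : Type*) [AddCommGroup P] [Module R P]
    [AddCommGroup N] [Module R N] [Module.Finite R P] [Module.Finite R N] [Nontrivial N] :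
    BddAbove {n : ℕ | ∃ f : P →ₗ[R] (Fin n → N), Surjective f} := by
  obtain ⟨m, hm, hne⟩ := exists_maximal_smul_ne_top (R := R) N
  obtain ⟨φ, hφ⟩ := exists_surjective_to_quotient hm hne
  letI : Field (R ⧸ m) := Ideal.Quotient.field m
  obtain ⟨g, s, hs⟩ := Module.Finite.exists_fin (R := R) (M := P)
  refine ⟨g, fun n hn => ?_⟩
  obtain ⟨f, hf⟩ := hn
  let Φ : (Fin n → N) →ₗ[R] (Fin n → R ⧸ m) :=
    LinearMap.pi (fun i => φ ∘ₗ LinearMap.proj i)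
  have hΦ : Surjective Φ := by
    intro u
    choose w hw using fun i => hφ (u i)
    exact ⟨w, funext fun i => hw i⟩
  let G := Φ ∘ₗ f
  have hG : Surjective G := by
    rw [LinearMap.coe_comp]; exact hΦ.comp hf
  have h1 : Submodule.span R (Set.range (G ∘ s)) = ⊤ := by
    rw [Set.range_comp, ← Submodule.map_span, hs, Submodule.map_top,
      LinearMap.range_eq_top.2 hG]
  have h2 : Submodule.span (R ⧸ m) (Set.range (G ∘ s)) = ⊤ := by
    have h3 := Submodule.span_le_restrictScalars R (R ⧸ m) (Set.range (G ∘ s))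
    rw [h1] at h3
    apply top_unique
    intro x _
    exact h3 trivial
  have h4 := finrank_le_of_span_eq_top h2
  simpa [Module.finrank_fin_fun] using h4

lemma mem_surjSet_add {A B C N : Type*} [AddCommGroup A] [Module R A]
    [AddCommGroup B] [Module R B] [AddCommGroup C] [Module R C]
    [AddCommGroup N] [Module R N]
    (π : C →ₗ[R] A × B) (hπ : Surjective π) {a b : ℕ}
    (fa : A →ₗ[R] (Fin a → N)) (hfa : Surjective fa)
    (fb : B →ₗ[R] (Fin b → N)) (hfb : Surjective fb) :
    ∃ h : C →ₗ[R] (Fin (a + b) → N), Surjective h := by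
  let E : ((Fin a → N) × (Fin b → N)) ≃ₗ[R] (Fin (a + b) → N) :=
    (LinearEquiv.sumArrowLequivProdArrow (Fin a) (Fin b) R N).symm ≪≫ₗ
      LinearEquiv.funCongrLeft R N finSumFinEquiv.symm
  refine ⟨E.toLinearMap ∘ₗ (fa.prodMap fb) ∘ₗ π, ?_⟩
  rw [LinearMap.coe_comp, LinearMap.coe_comp]
  exact E.surjective.comp ((hfa.prodMap hfb).comp hπ)

lemma surjNum_add_le {A B C N : Type*} [AddCommGroup A] [Module R A]
    [AddCommGroup B] [Module R B] [AddCommGroup C] [Module R C]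
    [AddCommGroup N] [Module R N]
    [Module.Finite R A] [Module.Finite R B] [Module.Finite R C]
    [Module.Finite R N] [Nontrivial N]
    (π : C →ₗ[R] A × B) (hπ : Surjective π) :
    surjNum R A N + surjNum R B N ≤ surjNum R C N := by
  have hza : (0 : ℕ) ∈ {n : ℕ | ∃ f : A →ₗ[R] (Fin n → N), Surjective f} :=
    ⟨0, fun y => ⟨0, Subsingleton.elim _ _⟩⟩
  have hzb : (0 : ℕ) ∈ {n : ℕ | ∃ f : B →ₗ[R] (Fin n → N), Surjective f} :=
    ⟨0, fun y => ⟨0, Subsingleton.elim _ _⟩⟩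
  have ha := Nat.sSup_mem ⟨0, hza⟩ (bddAbove_surjSet A N)
  have hb := Nat.sSup_mem ⟨0, hzb⟩ (bddAbove_surjSet B N)
  obtain ⟨fa, hfa⟩ := ha
  obtain ⟨fb, hfb⟩ := hb
  exact le_csSup (bddAbove_surjSet C N) (mem_surjSet_add π hπ fa hfa fb hfb)

end aux

/-- Superadditivity of the asymptotic surjective number:
`asn_N(M) + asn_N(M') ≤ asn_N(M ⊕ M')`.  Here `L`, `L'`, `L''` are the limits of
`surj_N(M^{⊕r})/r`, `surj_N(M'^{⊕r})/r` and `surj_N((M ⊕ M')^{⊕r})/r`. -/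
theorem asn_superadditive
    {R : Type*} [CommRing R] [IsNoetherianRing R]
    {M M' N : Type*} [AddCommGroup M] [Module R M] [AddCommGroup M'] [Module R M']
    [AddCommGroup N] [Module R N]
    [Module.Finite R M] [Module.Finite R M'] [Module.Finite R N] (hN : Nontrivial N)
    (L L' L'' : ℝ)
    (hL : Filter.Tendsto
      (fun r : ℕ => (surjNum R (Fin r → M) N : ℝ) / r) Filter.atTop (nhds L))
    (hL' : Filter.Tendsto
      (fun r : ℕ => (surjNum R (Fin r → M') N : ℝ) / r) Filter.atTop (nhds L'))
    (hL'' : Filter.Tendsto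
      (fun r : ℕ => (surjNum R (Fin r → M × M') N : ℝ) / r) Filter.atTop (nhds L'')) :
    L + L' ≤ L'' := by
  have key : ∀ r : ℕ,
      (surjNum R (Fin r → M) N : ℝ) / r + (surjNum R (Fin r → M') N : ℝ) / r ≤
        (surjNum R (Fin r → M × M') N : ℝ) / r := by
    intro r
    have hnat : surjNum R (Fin r → M) N + surjNum R (Fin r → M') N ≤
        surjNum R (Fin r → M × M') N := by
      refine surjNum_add_le (N := N)
        (((LinearMap.fst R M M').compLeft (Fin r)).prod
          ((LinearMap.snd R M M').compLeft (Fin r))) ?_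
      intro ⟨u, v⟩
      exact ⟨fun i => (u i, v i), rfl⟩
    rw [← add_div]
    rcases Nat.eq_zero_or_pos r with rfl | hr
    · simp
    · gcongr
      exact_mod_cast hnat
  exact le_of_tendsto_of_tendsto' (hL.add hL') hL'' key
end

section
/- Let (R, m) be a Noetherian local ring and let M, M', N be finitely generated R-modules with N ≠ 0. Then surj_N(M') ≤ surj_N(M ⊕ M') − surj_N(M) ≤ μ_R(M'); equivalently, surj_N(M) + surj_N(M') ≤ surj_N(M ⊕ M') ≤ surj_N(M) + μ_R(M'), where μ_R(M') is the minimal number of generators of M'. -/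
/-- The minimal number of generators of a finitely generated module `M` over a ring `R`. -/
noncomputable def minGens (R M : Type*) [CommRing R] [AddCommGroup M] [Module R M] : ℕ :=
  sInf {n : ℕ | ∃ s : Fin n → M, Submodule.span R (Set.range s) = ⊤}

open Function IsLocalRing TensorProduct

section Aux

variable {R M N : Type*} [CommRing R] [IsLocalRing R] [AddCommGroup M] [Module R M]
    [AddCommGroup N] [Module R N]

/-- Core peeling lemma: a surjection `M × R → N^{c+1}` yields a surjection `M → N^c`. -/
lemma surjNum_peel_aux [Module.Finite R N] (c : ℕ)
    (f : (M × R) →ₗ[R] (Fin (c+1) → N)) (hf : Function.Surjective f) :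
    ∃ g : M →ₗ[R] (Fin c → N), Function.Surjective g := by
  set 𝔪 := maximalIdeal R with h𝔪
  set U : Submodule R (Fin (c+1) → N) := LinearMap.range (f ∘ₗ LinearMap.inl R M R) with hU
  set v : Fin (c+1) → N := f (0, 1) with hv
  have hdecomp : ∀ w : Fin (c+1) → N, ∃ u ∈ U, ∃ r : R, w = u + r • v := by
    intro w
    obtain ⟨⟨m, r⟩, rfl⟩ := hf w
    refine ⟨f (m, 0), ⟨m, rfl⟩, r, ?_⟩
    rw [← map_smul, ← map_add]
    congr 1
    simp
  let p : Fin (c+1) → ((Fin (c+1) → N) →ₗ[R] (Fin c → N)) :=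
    fun i => LinearMap.funLeft R N i.succAbove
  have hpsurj : ∀ i, Function.Surjective (p i) := fun i =>
    LinearMap.funLeft_surjective_of_injective R N _ (Fin.succAbove_right_injective)
  have key : ∃ i, U ⊔ 𝔪 • ⊤ ⊔ LinearMap.ker (p i) = ⊤ := by
    by_contra hcon
    push_neg at hcon
    have hker : ∀ i, LinearMap.ker (p i) ≤ U ⊔ 𝔪 • (⊤ : Submodule R (Fin (c+1) → N)) := by
      intro i w hw
      obtain ⟨u, hu, r, rfl⟩ := hdecomp w
      by_cases hr : r ∈ 𝔪
      · exact Submodule.add_mem _ (Submodule.mem_sup_left hu)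
          (Submodule.mem_sup_right (Submodule.smul_mem_smul hr trivial))
      · exfalso
        have hunit : IsUnit r := by
          rwa [IsLocalRing.mem_maximalIdeal, mem_nonunits_iff, not_not] at hr
        obtain ⟨s, hs⟩ := hunit.exists_left_inv
        have hvmem : v ∈ U ⊔ 𝔪 • ⊤ ⊔ LinearMap.ker (p i) := by
          have : v = s • ((u + r • v) - u) := by
            rw [add_sub_cancel_left, smul_smul, hs, one_smul]
          rw [this]
          refine Submodule.smul_mem _ _ (Submodule.sub_mem _ ?_ ?_)
          · exact Submodule.mem_sup_right hw
          · exact Submodule.mem_sup_left (Submodule.mem_sup_left hu)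
        apply hcon i
        rw [eq_top_iff]
        intro w _
        obtain ⟨u', hu', r', rfl⟩ := hdecomp w
        exact Submodule.add_mem _ (Submodule.mem_sup_left (Submodule.mem_sup_left hu'))
          (Submodule.smul_mem _ _ hvmem)
    have htop : (⊤ : Submodule R (Fin (c+1) → N)) ≤ U ⊔ 𝔪 • ⊤ := by
      intro w _
      rw [← Finset.univ_sum_single w]
      refine Submodule.sum_mem _ (fun i _ => hker i ?_)
      rw [LinearMap.mem_ker]
      ext j
      simp [p, LinearMap.funLeft, Pi.single_apply, (Fin.succAbove_ne i j).symm]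
    exact hcon 0 (by rw [eq_top_iff]; exact le_trans htop le_sup_left)
  obtain ⟨i, hi⟩ := key
  refine ⟨(p i) ∘ₗ f ∘ₗ LinearMap.inl R M R, ?_⟩
  rw [← LinearMap.range_eq_top, LinearMap.range_comp, ← hU, ← top_le_iff]
  have hmain : (⊤ : Submodule R (Fin c → N)) ≤ Submodule.map (p i) U ⊔ 𝔪 • ⊤ := by
    have htop : Submodule.map (p i) (⊤ : Submodule R (Fin (c+1) → N)) = ⊤ := by
      rw [Submodule.map_top, LinearMap.range_eq_top]; exact hpsurj i
    have h1 : Submodule.map (p i) (𝔪 • ⊤) ≤ 𝔪 • (⊤ : Submodule R (Fin c → N)) := by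
      rw [Submodule.map_smul'']
      exact Submodule.smul_mono le_rfl le_top
    have h2 : Submodule.map (p i) (LinearMap.ker (p i)) ≤ ⊥ := by
      rintro x ⟨y, hy, rfl⟩; exact hy
    calc (⊤ : Submodule R (Fin c → N))
        = Submodule.map (p i) (U ⊔ 𝔪 • ⊤ ⊔ LinearMap.ker (p i)) := by rw [hi, htop]
      _ = Submodule.map (p i) U ⊔ Submodule.map (p i) (𝔪 • ⊤)
            ⊔ Submodule.map (p i) (LinearMap.ker (p i)) := by
          rw [Submodule.map_sup, Submodule.map_sup]
      _ ≤ Submodule.map (p i) U ⊔ 𝔪 • ⊤ := by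
          refine sup_le (sup_le le_sup_left ?_) ?_
          · exact le_sup_of_le_right h1
          · exact le_sup_of_le_left (h2.trans bot_le)
  exact Submodule.le_of_le_smul_of_le_jacobson_bot (Module.Finite.fg_top (R := R))
    (by rw [jacobson_eq_maximalIdeal ⊥ bot_ne_top]) (hmain.trans (by rw [sup_comm]))

/-- Iterated peeling: a surjection `M × R^g → N^c` yields a surjection `M → N^{c-g}`. -/
lemma surjNum_peel_many [Module.Finite R N] (g : ℕ) :
    ∀ (c : ℕ) (f : (M × (Fin g → R)) →ₗ[R] (Fin c → N)), Function.Surjective f →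
      ∃ h : M →ₗ[R] (Fin (c - g) → N), Function.Surjective h := by
  induction g with
  | zero =>
    intro c f hf
    refine ⟨f ∘ₗ LinearMap.prod LinearMap.id 0, fun y => ?_⟩
    obtain ⟨⟨m, z⟩, hm⟩ := hf y
    exact ⟨m, by simpa [Subsingleton.elim (0 : Fin 0 → R) z] using hm⟩
  | succ g ih =>
    intro c f hf
    match c with
    | 0 =>
      rw [Nat.zero_sub]
      exact ⟨0, fun y => ⟨0, Subsingleton.elim _ _⟩⟩
    | (c + 1) =>
      let e : ((M × (Fin g → R)) × R) ≃ₗ[R] M × (Fin (g+1) → R) :=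
        (LinearEquiv.prodAssoc R M (Fin g → R) R).trans
          ((LinearEquiv.refl R M).prodCongr
            (((LinearEquiv.refl R (Fin g → R)).prodCongr
              (LinearEquiv.funUnique (Fin 1) R R).symm).trans
              (((LinearEquiv.sumArrowLequivProdArrow (Fin g) (Fin 1) R R).symm).trans
                (LinearEquiv.funCongrLeft R R finSumFinEquiv.symm))))
      obtain ⟨h₁, hh₁⟩ := surjNum_peel_aux c (f ∘ₗ e.toLinearMap) (hf.comp e.surjective)
      obtain ⟨h₂, hh₂⟩ := ih c h₁ hh₁
      rw [Nat.succ_sub_succ]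
      exact ⟨h₂, hh₂⟩

/-- The set of `n` admitting a surjection `M → N^n` is bounded above. -/
lemma surjNum_bddAbove [Module.Finite R M] [Module.Finite R N] (hN : Nontrivial N) :
    BddAbove {n : ℕ | ∃ f : M →ₗ[R] (Fin n → N), Function.Surjective f} := by
  classical
  set k := ResidueField R
  refine ⟨Module.finrank k (k ⊗[R] M), fun n hn => ?_⟩
  obtain ⟨f, hf⟩ := hn
  have hsurj : Function.Surjective (LinearMap.baseChange k f) := by
    rw [LinearMap.baseChange_eq_ltensor]
    exact LinearMap.lTensor_surjective _ hf
  have h1 : Module.finrank k (k ⊗[R] (Fin n → N)) ≤ Module.finrank k (k ⊗[R] M) := by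
    have h := LinearMap.finrank_range_le (LinearMap.baseChange k f)
    rwa [LinearMap.range_eq_top.mpr hsurj, finrank_top] at h
  have e : (k ⊗[R] (Fin n → N)) ≃ₗ[k] (Fin n → k ⊗[R] N) :=
    TensorProduct.piRight R k k (fun _ : Fin n => N)
  have h2 : Module.finrank k (k ⊗[R] (Fin n → N)) = n * Module.finrank k (k ⊗[R] N) := by
    rw [e.finrank_eq, Module.finrank_pi_fintype, Finset.sum_const, Finset.card_univ,
      Fintype.card_fin, smul_eq_mul]
  have hnt : Nontrivial (k ⊗[R] N) := by
    rw [← not_subsingleton_iff_nontrivial, IsLocalRing.subsingleton_tensorProduct]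
    exact fun h => (not_subsingleton_iff_nontrivial.mpr hN) h
  have h3 : 0 < Module.finrank k (k ⊗[R] N) := Module.finrank_pos
  calc n = n * 1 := (mul_one n).symm
    _ ≤ n * Module.finrank k (k ⊗[R] N) := Nat.mul_le_mul_left n h3
    _ = Module.finrank k (k ⊗[R] (Fin n → N)) := h2.symm
    _ ≤ Module.finrank k (k ⊗[R] M) := h1

/-- `surjNum` is witnessed by an actual surjection, and is an upper bound. -/
lemma surjNum_spec [Module.Finite R M] [Module.Finite R N] (hN : Nontrivial N) :
    (∃ f : M →ₗ[R] (Fin (surjNum R M N) → N), Function.Surjective f) ∧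
      ∀ n : ℕ, (∃ f : M →ₗ[R] (Fin n → N), Function.Surjective f) → n ≤ surjNum R M N := by
  have hne : (0 : ℕ) ∈ {n : ℕ | ∃ f : M →ₗ[R] (Fin n → N), Function.Surjective f} :=
    ⟨0, fun y => ⟨0, Subsingleton.elim _ _⟩⟩
  have hbdd := surjNum_bddAbove (R := R) (M := M) (N := N) hN
  exact ⟨Nat.sSup_mem ⟨0, hne⟩ hbdd, fun n hn => le_csSup hbdd hn⟩

end Aux

/-- Over a Noetherian local ring,
`surj_N(M) + surj_N(M') ≤ surj_N(M ⊕ M') ≤ surj_N(M) + μ_R(M')`, equivalently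
`surj_N(M') ≤ surj_N(M ⊕ M') − surj_N(M) ≤ μ_R(M')`. -/
theorem surjNum_sum_bounds
    {R : Type*} [CommRing R] [IsNoetherianRing R] [IsLocalRing R]
    {M M' N : Type*} [AddCommGroup M] [Module R M] [AddCommGroup M'] [Module R M']
    [AddCommGroup N] [Module R N]
    [Module.Finite R M] [Module.Finite R M'] [Module.Finite R N] (hN : Nontrivial N) :
    surjNum R M N + surjNum R M' N ≤ surjNum R (M × M') N ∧
      surjNum R (M × M') N ≤ surjNum R M N + minGens R M' := by
  classical
  obtain ⟨⟨f, hf⟩, hub⟩ := surjNum_spec (R := R) (M := M) (N := N) hN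
  obtain ⟨⟨f', hf'⟩, _⟩ := surjNum_spec (R := R) (M := M') (N := N) hN
  obtain ⟨⟨F, hF⟩, hub'⟩ := surjNum_spec (R := R) (M := M × M') (N := N) hN
  constructor
  · -- lower bound
    let e : ((Fin (surjNum R M N) → N) × (Fin (surjNum R M' N) → N)) ≃ₗ[R]
        (Fin (surjNum R M N + surjNum R M' N) → N) :=
      ((LinearEquiv.sumArrowLequivProdArrow (Fin (surjNum R M N)) (Fin (surjNum R M' N))
        R N).symm).trans (LinearEquiv.funCongrLeft R N finSumFinEquiv.symm)
    refine hub' (surjNum R M N + surjNum R M' N) ⟨e.toLinearMap ∘ₗ (f.prodMap f'), ?_⟩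
    rw [LinearMap.coe_comp, LinearMap.coe_prodMap]
    exact e.surjective.comp (hf.prodMap hf')
  · -- upper bound
    have hGmem : minGens R M' ∈ {n : ℕ | ∃ s : Fin n → M', Submodule.span R (Set.range s) = ⊤} :=
      Nat.sInf_mem (Module.Finite.exists_fin (R := R) (M := M'))
    obtain ⟨s, hs⟩ := hGmem
    have hlc : Function.Surjective (Fintype.linearCombination R s) := by
      rw [← LinearMap.range_eq_top, Fintype.range_linearCombination, hs]
    obtain ⟨h, hh⟩ := surjNum_peel_many (minGens R M') (surjNum R (M × M') N)
      (F ∘ₗ (LinearMap.id.prodMap (Fintype.linearCombination R s)))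
      (by rw [LinearMap.coe_comp, LinearMap.coe_prodMap]
          exact hF.comp (surjective_id.prodMap hlc))
    have := hub _ ⟨h, hh⟩
    omega
end

section
/- Let k be a field, Λ a finite-dimensional selfinjective k-algebra (Λ is injective as a left module over itself), L a simple left Λ-module, and h : P → L a projective cover of L (P is a projective Λ-module, h is surjective, and ker h is superfluous in P, meaning that for any submodule X of P, X + ker h = P implies X = P). Let M be a finitely generated indecomposable Λ-module. Then the following are equivalent: (1) Ext¹_Λ(M, ker h) = 0; (2) the induced map h_* : Hom_Λ(M, P) → Hom_Λ(M, L) is surjective; (3) M is projective or Hom_Λ(M, L) = 0. -/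
open CategoryTheory

/-- A module is indecomposable if it is nonzero and admits no nontrivial direct sum
decomposition. -/
def IsIndecomposableModule (Λ M : Type*) [Ring Λ] [AddCommGroup M] [Module Λ M] : Prop :=
  Nontrivial M ∧ ∀ X Y : Submodule Λ M, IsCompl X Y → X = ⊥ ∨ Y = ⊥

theorem factor_aux {Λ : Type*} [Ring Λ] {A B C : Type*} [AddCommGroup A] [Module Λ A]
    [AddCommGroup B] [Module Λ B] [AddCommGroup C] [Module Λ C]
    (f : A →ₗ[Λ] B) (g : A →ₗ[Λ] C) (hf : Function.Surjective f)
    (hle : LinearMap.ker f ≤ LinearMap.ker g) : ∃ e : B →ₗ[Λ] C, e ∘ₗ f = g := by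
  refine ⟨((LinearMap.ker f).liftQ g hle) ∘ₗ
    ((f.quotKerEquivOfSurjective hf).symm : B →ₗ[Λ] _), ?_⟩
  ext a
  have : (f.quotKerEquivOfSurjective hf).symm (f a) = Submodule.Quotient.mk a := by
    rw [LinearEquiv.symm_apply_eq]; rfl
  simp [this]


theorem P_inj {Λ : Type} [Ring Λ] (hself : Module.Injective Λ Λ)
    (L : Type) [AddCommGroup L] [Module Λ L] (hL : IsSimpleModule Λ L)
    (P : Type) [AddCommGroup P] [Module Λ P] [Module.Projective Λ P]
    (h : P →ₗ[Λ] L) (hsurj : Function.Surjective h)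
    (hsmall : ∀ X : Submodule Λ P, X ⊔ LinearMap.ker h = ⊤ → X = ⊤) :
    Module.Injective Λ P := by
  -- L is nontrivial
  have : Nontrivial L := IsSimpleModule.nontrivial Λ L
  obtain ⟨l, hl⟩ := exists_ne (0 : L)
  obtain ⟨p, hp⟩ := hsurj l
  -- span of l is ⊤
  have hlspan : Submodule.span Λ {l} = ⊤ := by
    rcases eq_bot_or_eq_top (α := Submodule Λ L) (Submodule.span Λ {l}) with h1 | h1
    · exfalso
      have : l ∈ Submodule.span Λ {l} := Submodule.mem_span_singleton_self l
      rw [h1] at this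
      exact absurd ((Submodule.mem_bot Λ).1 this) hl
    · exact h1
  -- span{p} ⊔ ker h = ⊤
  have hsup : Submodule.span Λ {p} ⊔ LinearMap.ker h = ⊤ := by
    rw [eq_top_iff]
    intro x _
    have : h x ∈ Submodule.span Λ {l} := hlspan ▸ Submodule.mem_top
    obtain ⟨c, hc⟩ := Submodule.mem_span_singleton.1 this
    refine Submodule.mem_sup.2 ⟨c • p, Submodule.smul_mem _ _ (Submodule.mem_span_singleton_self p),
      x - c • p, ?_, by abel⟩
    simp [LinearMap.mem_ker, hp, hc]
  have hspan : Submodule.span Λ {p} = ⊤ := hsmall _ hsup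
  -- σ : Λ → P surjective
  set σ : Λ →ₗ[Λ] P := LinearMap.toSpanSingleton Λ P p with hσ
  have hσsurj : Function.Surjective σ := by
    rw [← LinearMap.range_eq_top, ← LinearMap.span_singleton_eq_range, hspan]
  obtain ⟨s, hs⟩ := Module.projective_lifting_property σ LinearMap.id hσsurj
  refine ⟨fun X Y _ _ _ _ f hf g => ?_⟩
  obtain ⟨G, hG⟩ := hself.out f hf (s ∘ₗ g)
  refine ⟨σ ∘ₗ G, fun x => ?_⟩
  have h1 := congrArg σ (hG x)
  have h2 : σ (s (g x)) = g x := by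
    have := LinearMap.congr_fun hs (g x)
    simpa using this
  simpa [LinearMap.comp_apply] using h1.trans h2

theorem key {Λ : Type} [Ring Λ]
    {L P M A0 A1 A2 : Type} [AddCommGroup L] [Module Λ L] [AddCommGroup P] [Module Λ P]
    [AddCommGroup M] [Module Λ M] [AddCommGroup A0] [Module Λ A0]
    [AddCommGroup A1] [Module Λ A1] [AddCommGroup A2] [Module Λ A2]
    (h : P →ₗ[Λ] L) (hPinj : Module.Injective Λ P)
    (d1 : A1 →ₗ[Λ] A0) (d2 : A2 →ₗ[Λ] A1) (π : A0 →ₗ[Λ] M)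
    (hπ : Function.Surjective π)
    (hex0 : LinearMap.range d1 = LinearMap.ker π)
    (hex1 : LinearMap.range d2 = LinearMap.ker d1)
    (hlift0 : ∀ g : A0 →ₗ[Λ] L, ∃ G : A0 →ₗ[Λ] P, h ∘ₗ G = g) :
    (∀ β : A1 →ₗ[Λ] ↥(LinearMap.ker h), β ∘ₗ d2 = 0 →
        ∃ γ : A0 →ₗ[Λ] ↥(LinearMap.ker h), γ ∘ₗ d1 = β) ↔
      (∀ φ : M →ₗ[Λ] L, ∃ ψ : M →ₗ[Λ] P, h ∘ₗ ψ = φ) := by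
  have hπd1 : ∀ x, π (d1 x) = 0 := fun x => by
    have : d1 x ∈ LinearMap.ker π := hex0 ▸ LinearMap.mem_range_self d1 x
    exact this
  have hd1d2 : ∀ x, d1 (d2 x) = 0 := fun x => by
    have : d2 x ∈ LinearMap.ker d1 := hex1 ▸ LinearMap.mem_range_self d2 x
    exact this
  constructor
  · intro hext φ
    obtain ⟨G, hG⟩ := hlift0 (φ ∘ₗ π)
    have hGd1 : ∀ x, h (G (d1 x)) = 0 := fun x => by
      have := LinearMap.congr_fun hG (d1 x)
      simpa [LinearMap.comp_apply, hπd1 x] using this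
    set β : A1 →ₗ[Λ] ↥(LinearMap.ker h) :=
      LinearMap.codRestrict (LinearMap.ker h) (G ∘ₗ d1) (fun x => by
        simpa [LinearMap.mem_ker] using hGd1 x) with hβ
    obtain ⟨γ, hγ⟩ := hext β (by
      ext x
      have h0 : (β (d2 x) : P) = 0 := by
        show G (d1 (d2 x)) = 0
        rw [hd1d2, map_zero]
      simpa using h0)
    set θ : A0 →ₗ[Λ] P := G - (LinearMap.ker h).subtype ∘ₗ γ with hθ
    have hker : LinearMap.ker π ≤ LinearMap.ker θ := by
      rw [← hex0]
      rintro _ ⟨x, rfl⟩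
      have h1 : γ (d1 x) = β x := LinearMap.congr_fun hγ x
      have : θ (d1 x) = G (d1 x) - (β x : P) := by
        simp [hθ, LinearMap.sub_apply, LinearMap.comp_apply, h1]
      simp [LinearMap.mem_ker, this, hβ]
    obtain ⟨ψ, hψ⟩ := factor_aux π θ hπ hker
    refine ⟨ψ, ?_⟩
    ext m
    obtain ⟨a, rfl⟩ := hπ m
    have h1 : ψ (π a) = θ a := LinearMap.congr_fun hψ a
    have h2 : h (θ a) = φ (π a) := by
      have h3 : h (G a) = φ (π a) := LinearMap.congr_fun hG a
      have h4 : h ((LinearMap.ker h).subtype (γ a)) = 0 := (γ a).2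
      simp [hθ, map_sub, h4, h3]
    simp [LinearMap.comp_apply, h1, h2]
  · intro hlift β hβd2
    have hkerle : LinearMap.ker d1 ≤ LinearMap.ker ((LinearMap.ker h).subtype ∘ₗ β) := by
      rw [← hex1]
      rintro _ ⟨x, rfl⟩
      have : β (d2 x) = 0 := LinearMap.congr_fun hβd2 x
      simp [LinearMap.mem_ker, LinearMap.comp_apply, this]
    obtain ⟨α, hα⟩ := factor_aux d1.rangeRestrict ((LinearMap.ker h).subtype ∘ₗ β)
      d1.surjective_rangeRestrict (by rwa [LinearMap.ker_rangeRestrict])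
    obtain ⟨g, hg⟩ := hPinj.out (LinearMap.range d1).subtype
      (Submodule.injective_subtype _) α
    have hgd1 : ∀ x, g (d1 x) = (β x : P) := fun x => by
      have h1 : g ((LinearMap.range d1).subtype (d1.rangeRestrict x)) = α (d1.rangeRestrict x) :=
        hg _
      have h2 : α (d1.rangeRestrict x) = (β x : P) := LinearMap.congr_fun hα x
      simpa using h1.trans h2
    have hhg : LinearMap.ker π ≤ LinearMap.ker (h ∘ₗ g) := by
      rw [← hex0]
      rintro _ ⟨x, rfl⟩
      simp [LinearMap.mem_ker, LinearMap.comp_apply, hgd1 x, (β x).2]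
    obtain ⟨φ, hφ⟩ := factor_aux π (h ∘ₗ g) hπ hhg
    obtain ⟨ψ, hψ⟩ := hlift φ
    have hγ0 : ∀ a, h (g a - ψ (π a)) = 0 := fun a => by
      have h1 : φ (π a) = h (g a) := LinearMap.congr_fun hφ a
      have h2 : h (ψ (π a)) = φ (π a) := LinearMap.congr_fun hψ (π a)
      rw [map_sub, h2, h1, sub_self]
    refine ⟨LinearMap.codRestrict (LinearMap.ker h) (g - ψ ∘ₗ π)
      (fun a => by simpa [LinearMap.mem_ker] using hγ0 a), ?_⟩
    ext x
    show g (d1 x) - ψ (π (d1 x)) = (β x : P)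
    rw [hπd1 x, map_zero, sub_zero, hgd1 x]

theorem bridge {Λ : Type} [Ring Λ]
    {K : Type} [AddCommGroup K] [Module Λ K]
    (M : Type) [AddCommGroup M] [Module Λ M]
    (PR : ProjectiveResolution (ModuleCat.of Λ M)) :
    (Subsingleton (((Ext ℤ (ModuleCat Λ) 1).obj
        (Opposite.op (ModuleCat.of Λ M))).obj (ModuleCat.of Λ K)) ↔
      (∀ β : PR.complex.X 1 ⟶ ModuleCat.of Λ K, PR.complex.d 2 1 ≫ β = 0 →
        ∃ γ : PR.complex.X 0 ⟶ ModuleCat.of Λ K, PR.complex.d 1 0 ≫ γ = β)) := by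
  set Kc := ModuleCat.of Λ K with hKc
  set C := PR.complex.linearYonedaObj ℤ Kc with hC
  have e := PR.isoExt (R := ℤ) 1 Kc
  have h1 : Subsingleton (((Ext ℤ (ModuleCat Λ) 1).obj
      (Opposite.op (ModuleCat.of Λ M))).obj Kc) ↔ Subsingleton (C.homology 1) :=
    Equiv.subsingleton_congr ((forget (ModuleCat ℤ)).mapIso e).toEquiv
  have h2 : Subsingleton (C.homology 1) ↔ Limits.IsZero (C.homology 1) := by
    constructor
    · intro hs
      exact ModuleCat.isZero_of_subsingleton _
    · intro hz
      refine subsingleton_of_forall_eq 0 (fun a => ?_)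
      have := hz.eq_of_src (𝟙 (C.homology 1)) 0
      have h0 := LinearMap.congr_fun (congrArg ModuleCat.Hom.hom this) a
      simpa using h0
  have h3 : Limits.IsZero (C.homology 1) ↔ C.ExactAt 1 :=
    (HomologicalComplex.exactAt_iff_isZero_homology C 1).symm
  have h4 : C.ExactAt 1 ↔ (C.sc' 0 1 2).Exact :=
    HomologicalComplex.exactAt_iff' C 0 1 2 (by simp) (by simp)
  have h5 := (C.sc' 0 1 2).moduleCat_exact_iff
  rw [show (C.sc' 0 1 2).f = C.d 0 1 from rfl, show (C.sc' 0 1 2).g = C.d 1 2 from rfl] at h5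
  have hd : ∀ (i j : ℕ) (f : PR.complex.X i ⟶ Kc), (C.d i j) f = PR.complex.d j i ≫ f := by
    intro i j f
    show (PR.complex.linearYonedaObj ℤ Kc).d i j f = _
    rw [ChainComplex.linearYonedaObj_d]
    rfl
  rw [h1, h2, h3, h4, h5]
  constructor
  · intro hx β hβ
    obtain ⟨γ, hγ⟩ := hx β ((hd 1 2 β).trans hβ)
    exact ⟨γ, (hd 0 1 γ).symm.trans hγ⟩
  · intro hx β hβ
    obtain ⟨γ, hγ⟩ := hx β ((hd 1 2 β).symm.trans hβ)
    exact ⟨γ, (hd 0 1 γ).trans hγ⟩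

theorem part2 {Λ : Type} [Ring Λ]
    (L : Type) [AddCommGroup L] [Module Λ L] (hL : IsSimpleModule Λ L)
    (P : Type) [AddCommGroup P] [Module Λ P] [Module.Projective Λ P]
    (h : P →ₗ[Λ] L) (hsurj : Function.Surjective h)
    (hsmall : ∀ X : Submodule Λ P, X ⊔ LinearMap.ker h = ⊤ → X = ⊤)
    (M : Type) [AddCommGroup M] [Module Λ M]
    (hM : IsIndecomposableModule Λ M) :
    ((∀ φ : M →ₗ[Λ] L, ∃ ψ : M →ₗ[Λ] P, h ∘ₗ ψ = φ) ↔
      (Module.Projective Λ M ∨ ∀ φ : M →ₗ[Λ] L, φ = 0)) := by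
  constructor
  · intro hlift
    by_cases hz : ∀ φ : M →ₗ[Λ] L, φ = 0
    · exact Or.inr hz
    left
    push_neg at hz
    obtain ⟨φ, hφ⟩ := hz
    -- φ is surjective
    have hrange : LinearMap.range φ = ⊤ := by
      rcases eq_bot_or_eq_top (α := Submodule Λ L) (LinearMap.range φ) with h1 | h1
      · exact absurd (LinearMap.range_eq_bot.1 h1) hφ
      · exact h1
    obtain ⟨ψ, hψ⟩ := hlift φ
    -- range ψ ⊔ ker h = ⊤
    have hsup : LinearMap.range ψ ⊔ LinearMap.ker h = ⊤ := by
      rw [eq_top_iff]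
      intro x _
      have : h x ∈ LinearMap.range φ := hrange ▸ Submodule.mem_top
      obtain ⟨m, hm⟩ := this
      have hhm : h (ψ m) = h x := by
        have := LinearMap.congr_fun hψ m
        simpa [LinearMap.comp_apply, hm] using this.trans hm
      exact Submodule.mem_sup.2 ⟨ψ m, ⟨m, rfl⟩, x - ψ m,
        by simp [LinearMap.mem_ker, hhm], by abel⟩
    have hψsurj : Function.Surjective ψ := by
      rw [← LinearMap.range_eq_top]; exact hsmall _ hsup
    obtain ⟨s, hs⟩ := Module.projective_lifting_property ψ LinearMap.id hψsurj
    have hsec : ∀ x : P, ψ (s x) = x := fun x => LinearMap.congr_fun hs x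
    -- IsCompl (ker ψ) (range s)
    have hcompl : IsCompl (LinearMap.ker ψ) (LinearMap.range s) := by
      constructor
      · rw [disjoint_iff]
        ext x
        simp only [Submodule.mem_inf, Submodule.mem_bot, LinearMap.mem_ker, LinearMap.mem_range]
        constructor
        · rintro ⟨hk, q, rfl⟩
          have : ψ (s q) = 0 := hk
          rw [hsec] at this
          simp [this]
        · rintro rfl; exact ⟨by simp, 0, by simp⟩
      · rw [codisjoint_iff, eq_top_iff]
        intro m _
        exact Submodule.mem_sup.2 ⟨m - s (ψ m), by simp [LinearMap.mem_ker, hsec],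
          s (ψ m), ⟨ψ m, rfl⟩, by abel⟩
    rcases hM.2 _ _ hcompl with hk | hr
    · -- ψ injective, so M ≃ P
      have : Function.Injective ψ := LinearMap.ker_eq_bot.1 hk
      exact Module.Projective.of_equiv (LinearEquiv.ofBijective ψ ⟨this, hψsurj⟩).symm
    · -- range s = ⊥ : P trivial, contradiction with L nontrivial
      exfalso
      have : Nontrivial L := IsSimpleModule.nontrivial Λ L
      obtain ⟨l, hl⟩ := exists_ne (0 : L)
      obtain ⟨p, hp⟩ := hsurj l
      have : s p = 0 := by
        have : s p ∈ LinearMap.range s := ⟨p, rfl⟩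
        simpa [hr] using this
      have : p = 0 := by rw [← hsec p, this, map_zero]
      exact hl (by rw [← hp, this, map_zero])
  · rintro (hproj | hz) φ
    · exact Module.projective_lifting_property h φ hsurj
    · exact ⟨0, by rw [hz φ]; ext x; simp⟩

/-- Let `Λ` be a finite-dimensional selfinjective `k`-algebra, `L` a simple
`Λ`-module, `h : P → L` a projective cover (`P` projective, `h` surjective with
superfluous kernel) and `M` a finitely generated indecomposable `Λ`-module.
Then the following are equivalent:
(1) `Ext¹_Λ(M, ker h) = 0`;
(2) `h₊ : Hom_Λ(M, P) → Hom_Λ(M, L)` is surjective;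
(3) `M` is projective or `Hom_Λ(M, L) = 0`. -/
theorem selfinjective_ext_vanishing_tfae
    (k : Type) [Field k] (Λ : Type) [Ring Λ] [Algebra k Λ] [FiniteDimensional k Λ]
    (hself : Module.Injective Λ Λ)
    (L : Type) [AddCommGroup L] [Module Λ L] (hL : IsSimpleModule Λ L)
    (P : Type) [AddCommGroup P] [Module Λ P] [Module.Projective Λ P]
    (h : P →ₗ[Λ] L) (hsurj : Function.Surjective h)
    (hsmall : ∀ X : Submodule Λ P, X ⊔ LinearMap.ker h = ⊤ → X = ⊤)
    (M : Type) [AddCommGroup M] [Module Λ M] [Module.Finite Λ M]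
    (hM : IsIndecomposableModule Λ M) :
    (Subsingleton (((Ext ℤ (ModuleCat Λ) 1).obj
        (Opposite.op (ModuleCat.of Λ M))).obj (ModuleCat.of Λ (LinearMap.ker h))) ↔
      ∀ φ : M →ₗ[Λ] L, ∃ ψ : M →ₗ[Λ] P, h ∘ₗ ψ = φ) ∧
    ((∀ φ : M →ₗ[Λ] L, ∃ ψ : M →ₗ[Λ] P, h ∘ₗ ψ = φ) ↔
      (Module.Projective Λ M ∨ ∀ φ : M →ₗ[Λ] L, φ = 0)) := by
  have hPinj : Module.Injective Λ P := P_inj hself L hL P h hsurj hsmall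
  constructor
  · -- (1) ↔ (2)
    obtain ⟨PR⟩ := HasProjectiveResolution.out (Z := ModuleCat.of Λ M)
    refine (bridge M PR).trans ?_
    -- set up data for `key`
    let π₀ : PR.complex.X 0 ⟶ ModuleCat.of Λ M := PR.π.f 0
    have hπ : Function.Surjective π₀ := by
      have hπ0 : Epi π₀ := inferInstanceAs (Epi (PR.π.f 0))
      exact (ModuleCat.epi_iff_surjective π₀).1 hπ0
    have hex0 : LinearMap.range (PR.complex.d 1 0).hom = LinearMap.ker π₀.hom := by
      have := (ShortComplex.moduleCat_exact_iff_range_eq_ker _).1 PR.exact₀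
      exact this
    have hex1 : LinearMap.range (PR.complex.d 2 1).hom = LinearMap.ker (PR.complex.d 1 0).hom := by
      have := (ShortComplex.moduleCat_exact_iff_range_eq_ker _).1 (PR.exact_succ 0)
      exact this
    have hmorE : Epi (ModuleCat.ofHom h : ModuleCat.of Λ P ⟶ ModuleCat.of Λ L) :=
      (ModuleCat.epi_iff_surjective _).2 hsurj
    have hproj : Projective (PR.complex.X 0) := PR.projective 0
    have hlift0 : ∀ g : (PR.complex.X 0 : Type) →ₗ[Λ] L,
        ∃ G : (PR.complex.X 0 : Type) →ₗ[Λ] P, h ∘ₗ G = g := by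
      intro g
      refine ⟨(Projective.factorThru (P := PR.complex.X 0)
          (ModuleCat.ofHom g : PR.complex.X 0 ⟶ ModuleCat.of Λ L) (ModuleCat.ofHom h)).hom, ?_⟩
      have := Projective.factorThru_comp (P := PR.complex.X 0)
          (ModuleCat.ofHom g : PR.complex.X 0 ⟶ ModuleCat.of Λ L) (ModuleCat.ofHom h)
      have := congrArg ModuleCat.Hom.hom this
      rw [ModuleCat.hom_comp] at this
      exact this
    refine Iff.trans ?_
      (key h hPinj (PR.complex.d 1 0).hom (PR.complex.d 2 1).hom π₀.hom hπ hex0 hex1 hlift0)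
    constructor
    · intro H β hβ
      obtain ⟨γ, hγ⟩ := H (ModuleCat.ofHom β) (ModuleCat.hom_ext (by simpa using hβ))
      exact ⟨γ.hom, by simpa using congrArg ModuleCat.Hom.hom hγ⟩
    · intro H β hβ
      obtain ⟨γ, hγ⟩ := H β.hom (by simpa using congrArg ModuleCat.Hom.hom hβ)
      exact ⟨ModuleCat.ofHom γ, ModuleCat.hom_ext (by simpa using hγ)⟩
  · exact part2 L hL P h hsurj hsmall M hM
end

section
/- Let p be an odd prime, r ≥ 1 a natural number, and k an algebraically closed field of characteristic p. Let G be the subgroup of the symmetric group on F_p consisting of all affine permutations x ↦ ax + b with a ∈ F_p^×, b ∈ F_p, and let G act on the polynomial ring B = k[w_{x,j} : x ∈ F_p, 1 ≤ j ≤ r] by permuting the first index of the variables: φ·w_{x,j} = w_{φ(x),j}. If M is a finitely generated (equivalently, finite-dimensional over k) indecomposable kG-module that occurs as a kG-module direct summand of B and is not projective as a kG-module, then M is isomorphic to the one-dimensional trivial representation k. -/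
/-- The group of affine permutations `x ↦ ax + b` of `Z/pZ`. -/
def affineGroup (p : ℕ) : Subgroup (Equiv.Perm (ZMod p)) where
  carrier := {φ | ∃ a : (ZMod p)ˣ, ∃ b : ZMod p, ∀ x, φ x = a * x + b}
  one_mem' := ⟨1, 0, fun x => by simp⟩
  mul_mem' := by
    rintro φ ψ ⟨a, b, hφ⟩ ⟨c, d, hψ⟩
    refine ⟨a * c, a * d + b, fun x => ?_⟩
    simp only [Equiv.Perm.mul_apply, hφ, hψ, Units.val_mul]
    ring
  inv_mem' := by
    rintro φ ⟨a, b, hφ⟩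
    refine ⟨a⁻¹, -(↑a⁻¹ * b), fun x => ?_⟩
    apply φ.injective
    rw [show φ (φ⁻¹ x) = x from φ.apply_symm_apply x, hφ]
    symm
    have ha : (a : ZMod p) * (a⁻¹ : (ZMod p)ˣ) = 1 := by
      rw [← Units.val_mul, mul_inv_cancel]; simp
    calc (a : ZMod p) * ((a⁻¹ : (ZMod p)ˣ) * x + -((a⁻¹ : (ZMod p)ˣ) * b)) + b
        = ((a : ZMod p) * (a⁻¹ : (ZMod p)ˣ)) * x
          + (-(((a : ZMod p) * (a⁻¹ : (ZMod p)ˣ)) * b) + b) := by ring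
      _ = x := by rw [ha]; ring


open MvPolynomial Finsupp

namespace AffProof

variable {p r : ℕ}

/-- the exponent set -/
abbrev S (p r : ℕ) := (ZMod p × Fin r) →₀ ℕ

noncomputable instance : MulAction (affineGroup p) (S p r) where
  smul g d := Finsupp.mapDomain (fun q : ZMod p × Fin r => ((g : Equiv.Perm (ZMod p)) q.1, q.2)) d
  one_smul d := by
    have : (fun q : ZMod p × Fin r => (((1 : affineGroup p) : Equiv.Perm (ZMod p)) q.1, q.2)) = id := by
      funext q; simp
    show Finsupp.mapDomain _ d = d
    rw [this, Finsupp.mapDomain_id]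
  mul_smul g h d := by
    show Finsupp.mapDomain _ d = Finsupp.mapDomain _ (Finsupp.mapDomain _ d)
    rw [← Finsupp.mapDomain_comp]
    congr 1

lemma smul_def (g : affineGroup p) (d : S p r) :
    g • d = Finsupp.mapDomain (fun q : ZMod p × Fin r => ((g : Equiv.Perm (ZMod p)) q.1, q.2)) d := rfl

lemma injf (g : affineGroup p) :
    Function.Injective (fun q : ZMod p × Fin r => ((g : Equiv.Perm (ZMod p)) q.1, q.2)) := by
  rintro ⟨x, i⟩ ⟨y, j⟩ h
  simp only [Prod.mk.injEq] at h ⊢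
  exact ⟨(g : Equiv.Perm (ZMod p)).injective h.1, h.2⟩

lemma smul_apply (g : affineGroup p) (d : S p r) (z : ZMod p) (j : Fin r) :
    (g • d) ((g : Equiv.Perm (ZMod p)) z, j) = d (z, j) := by
  rw [smul_def]
  exact Finsupp.mapDomain_apply (injf g) d (z, j)

/-- fixed by the whole group -/
def IsFix (d : S p r) : Prop := ∀ g : affineGroup p, g • d = d

lemma isFix_of_translations (d : S p r)
    (h : ∀ c : ZMod p, ∃ g : affineGroup p,
      (∀ z, (g : Equiv.Perm (ZMod p)) z = z + c) ∧ g • d = d) :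
    IsFix d := by
  have hconst : ∀ z : ZMod p, ∀ j : Fin r, d (z, j) = d (0, j) := by
    intro z j
    obtain ⟨g, hg, hfix⟩ := h z
    have := smul_apply g d 0 j
    rw [hfix, hg 0, zero_add] at this
    exact this
  intro g
  ext q
  obtain ⟨w, j⟩ := q
  have h1 := smul_apply g d ((g : Equiv.Perm (ZMod p))⁻¹ w) j
  rw [show (g : Equiv.Perm (ZMod p)) ((g : Equiv.Perm (ZMod p))⁻¹ w) = w from Equiv.apply_symm_apply _ w] at h1
  rw [h1, hconst w j, hconst _ j]

end AffProof
section OrderP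
variable {p : ℕ} [Fact p.Prime]

lemma aval_eq_one (x : Equiv.Perm (ZMod p)) (hx : x ^ p = 1) (a : (ZMod p)ˣ) (b : ZMod p)
    (hab : ∀ z, x z = a * z + b) : (a : ZMod p) = 1 := by
  have hpow : ∀ n : ℕ, ∃ c : ZMod p, ∀ z, (x ^ n) z = (a : ZMod p) ^ n * z + c := by
    intro n
    induction n with
    | zero => exact ⟨0, fun z => by simp⟩
    | succ n ih =>
      obtain ⟨c, hc⟩ := ih
      refine ⟨(a : ZMod p) * c + b, fun z => ?_⟩
      rw [pow_succ', Equiv.Perm.mul_apply, hab ((x ^ n) z), hc z]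
      ring
  obtain ⟨c, hc⟩ := hpow p
  rw [hx] at hc
  have h0 := hc 0
  simp at h0
  have h1 := hc 1
  rw [← h0] at h1
  simp at h1
  exact h1.symm

lemma trans_pow (x : Equiv.Perm (ZMod p)) (b : ZMod p) (hb : ∀ z, x z = z + b) :
    ∀ (m : ℕ) (z : ZMod p), (x ^ m) z = z + (m : ZMod p) * b := by
  intro m
  induction m with
  | zero => simp
  | succ n ih =>
    intro z
    rw [pow_succ, Equiv.Perm.mul_apply, ih (x z), hb z]
    push_cast
    ring
end OrderP

namespace AffProof
variable {p r : ℕ} [Fact p.Prime]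

noncomputable instance : Fintype (affineGroup p) := Fintype.ofFinite _

lemma not_dvd_card_stab (d : S p r) (hd : ¬ IsFix d) :
    ¬ (p ∣ Nat.card (MulAction.stabilizer (affineGroup p) d)) := by
  intro hdvd
  haveI : Fintype (MulAction.stabilizer (affineGroup p) d) := Fintype.ofFinite _
  rw [Nat.card_eq_fintype_card] at hdvd
  obtain ⟨y, hy⟩ := exists_prime_orderOf_dvd_card p hdvd
  set x : affineGroup p := (y : affineGroup p) with hxdef
  have hox : orderOf x = p :=
    (orderOf_injective (MulAction.stabilizer (affineGroup p) d).subtype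
      (Subgroup.subtype_injective _) y).trans hy
  have hxd : x • d = d := y.2
  have hxp : (x : Equiv.Perm (ZMod p)) ^ p = 1 := by
    have hdvd2 : orderOf x ∣ p := by rw [hox]
    have : x ^ p = 1 := orderOf_dvd_iff_pow_eq_one.mp hdvd2
    have := congrArg (Subgroup.subtype (affineGroup p)) this
    simpa using this
  obtain ⟨a, b, hab⟩ := x.2
  have ha : (a : ZMod p) = 1 := aval_eq_one _ hxp a b hab
  have htrans : ∀ z, (x : Equiv.Perm (ZMod p)) z = z + b := by
    intro z; rw [hab z, ha, one_mul]
  have hb : b ≠ 0 := by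
    intro h0
    have : x = 1 := by
      apply Subtype.ext
      apply Equiv.ext
      intro z
      simp [htrans z, h0]
    rw [this, orderOf_one] at hox
    exact (Fact.out : p.Prime).ne_one hox.symm
  have hxm : ∀ m : ℕ, (x ^ m) • d = d := by
    intro m
    induction m with
    | zero => rw [pow_zero, one_smul]
    | succ n ih => rw [pow_succ, mul_smul, hxd, ih]
  apply hd
  apply isFix_of_translations
  intro c
  refine ⟨x ^ (c * b⁻¹).val, fun z => ?_, hxm _⟩
  have hcoe : ((x ^ (c * b⁻¹).val : affineGroup p) : Equiv.Perm (ZMod p))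
      = (x : Equiv.Perm (ZMod p)) ^ (c * b⁻¹).val := by
    push_cast
    rfl
  rw [hcoe, trans_pow _ b htrans _ z]
  congr 1
  have hval : (((c * b⁻¹).val : ℕ) : ZMod p) = c * b⁻¹ := ZMod.natCast_rightInverse _
  rw [hval, mul_assoc, inv_mul_cancel₀ hb, mul_one]

end AffProof

namespace AffProof
namespace Part2
open scoped Classical

variable (p r : ℕ) [Fact p.Prime]

noncomputable def osetoid : Setoid (S p r) := MulAction.orbitRel (affineGroup p) (S p r)

abbrev Q := Quotient (osetoid p r)

variable {p r}
set_option linter.unusedSectionVars false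

noncomputable def rep (d : S p r) : S p r := (Quotient.mk (osetoid p r) d).out

lemma rep_orbit (d : S p r) : ∃ g : affineGroup p, g • rep d = d := by
  have h : (osetoid p r).r (rep d) d := by
    apply Quotient.exact (s := osetoid p r)
    exact Quotient.out_eq _
  have h2 := (osetoid p r).symm h
  exact (MulAction.orbitRel_apply.mp h2)

lemma rep_smul (g : affineGroup p) (d : S p r) : rep (g • d) = rep d := by
  unfold rep
  congr 1
  apply Quotient.sound (s := osetoid p r)
  exact MulAction.orbitRel_apply.mpr (MulAction.mem_orbit d g)

noncomputable def T (d : S p r) : Finset (affineGroup p) :=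
  Finset.univ.filter (fun g => g • rep d = d)

lemma mem_T {d : S p r} {g : affineGroup p} : g ∈ T d ↔ g • rep d = d := by
  simp [T]

lemma T_card (d : S p r) :
    (T d).card = Nat.card (MulAction.stabilizer (affineGroup p) (rep d)) := by
  obtain ⟨g₀, hg₀⟩ := rep_orbit d
  rw [← Nat.card_eq_finsetCard]
  symm
  apply Nat.card_congr
  refine ⟨fun h => ⟨g₀ * h.1, ?_⟩, fun g => ⟨g₀⁻¹ * g.1, ?_⟩, ?_, ?_⟩
  · rw [mem_T, mul_smul]
    have : h.1 • rep d = rep d := h.2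
    rw [this, hg₀]
  · apply MulAction.mem_stabilizer_iff.mpr
    rw [mul_smul, mem_T.mp g.2, eq_comm, eq_inv_smul_iff, hg₀]
  · intro h; ext; simp
  · intro g; ext; simp

lemma isFix_rep {d : S p r} (hd : ¬ IsFix d) : ¬ IsFix (rep d) := by
  intro hfix
  obtain ⟨g₀, hg₀⟩ := rep_orbit d
  rw [hfix g₀] at hg₀
  rw [← hg₀] at hd
  exact hd hfix

lemma T_card_ne_zero {d : S p r} (hd : ¬ IsFix d) (k : Type) [Field k] [CharP k p] :
    ((T d).card : k) ≠ 0 := by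
  rw [Ne, CharP.cast_eq_zero_iff k p, T_card]
  exact not_dvd_card_stab (rep d) (isFix_rep hd)

lemma T_smul (g : affineGroup p) (d : S p r) :
    T (g • d) = (T d).image (fun g' => g * g') := by
  ext g'
  rw [mem_T, rep_smul, Finset.mem_image]
  constructor
  · intro h
    refine ⟨g⁻¹ * g', ?_, by group⟩
    rw [mem_T, mul_smul, h, inv_smul_smul]
  · rintro ⟨g'', hg'', rfl⟩
    rw [mul_smul, mem_T.mp hg'']

end Part2
end AffProof

namespace AffProof
namespace Part2
open scoped Classical
open MvPolynomial

variable {p r : ℕ} [Fact p.Prime] (k : Type) [Field k]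
set_option linter.unusedSectionVars false

lemma isFix_smul_iff (g : affineGroup p) (d : S p r) : IsFix (g • d) ↔ IsFix d := by
  constructor
  · intro hfix
    have hd : g • d = d := by
      have h1 := hfix 1
      rw [one_smul] at h1
      have h2 := hfix g⁻¹
      rw [inv_smul_smul] at h2
      exact h2.symm
    rwa [hd] at hfix
  · intro hfix g'
    rw [hfix g, hfix g']

noncomputable def tau (ρB : Representation k (affineGroup p) (MvPolynomial (ZMod p × Fin r) k)) :
    (Q p r →₀ MonoidAlgebra k (affineGroup p)) →ₗ[k] MvPolynomial (ZMod p × Fin r) k :=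
  Finsupp.lsum k fun o => (Finsupp.lsum k fun g =>
    LinearMap.toSpanSingleton k _ (ρB g (monomial o.out 1))) ∘ₗ
      (MonoidAlgebra.coeffLinearEquiv k).toLinearMap

lemma tau_single (ρB : Representation k (affineGroup p) (MvPolynomial (ZMod p × Fin r) k))
    (o : Q p r) (g : affineGroup p) (c : k) :
    tau k ρB (Finsupp.single o (MonoidAlgebra.single g c)) = c • ρB g (monomial o.out 1) := by
  unfold tau
  rw [Finsupp.lsum_single, LinearMap.comp_apply]
  show (Finsupp.lsum k _) (Finsupp.single g c) = _
  rw [Finsupp.lsum_single]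
  rw [LinearMap.toSpanSingleton_apply]

/-- the value of σ on the monomial with exponent `d` -/
noncomputable def sigVal (d : S p r) : Q p r →₀ MonoidAlgebra k (affineGroup p) :=
  if IsFix d then 0 else ((T d).card : k)⁻¹ •
    Finsupp.single (Quotient.mk (osetoid p r) d) (∑ g ∈ T d, MonoidAlgebra.single g (1 : k))

noncomputable def sig : MvPolynomial (ZMod p × Fin r) k →ₗ[k]
    (Q p r →₀ MonoidAlgebra k (affineGroup p)) :=
  (basisMonomials _ k).constr k (sigVal k)

lemma sig_monomial (d : S p r) (a : k) :
    sig k (monomial d a) = a • sigVal k d := by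
  have h1 : monomial d a = a • monomial d (1 : k) := by
    rw [MvPolynomial.smul_monomial, smul_eq_mul, mul_one]
  rw [h1, map_smul]
  congr 1
  have h2 : monomial d (1 : k) = (basisMonomials _ k) d := by
    rw [coe_basisMonomials]
  rw [h2]
  unfold sig
  rw [Module.Basis.constr_basis]

end Part2
end AffProof

namespace AffProof
namespace Part2
open scoped Classical
open MvPolynomial

variable {p r : ℕ} [Fact p.Prime] (k : Type) [Field k]
variable (ρB : Representation k (affineGroup p) (MvPolynomial (ZMod p × Fin r) k))
set_option linter.unusedSectionVars false

lemma rhoB_monomial (hρ : ∀ g : affineGroup p, ρB g =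
      (MvPolynomial.rename
        (fun q : ZMod p × Fin r => ((g : Equiv.Perm (ZMod p)) q.1, q.2))).toLinearMap)
    (g : affineGroup p) (d : S p r) (a : k) :
    ρB g (monomial d a) = monomial (g • d) a := by
  rw [hρ g]
  show MvPolynomial.rename _ (monomial d a) = _
  rw [MvPolynomial.rename_monomial]
  rfl

lemma tau_sig_monomial [CharP k p]
    (hρ : ∀ g : affineGroup p, ρB g =
      (MvPolynomial.rename
        (fun q : ZMod p × Fin r => ((g : Equiv.Perm (ZMod p)) q.1, q.2))).toLinearMap)
    (d : S p r) (a : k) :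
    tau k ρB (sig k (monomial d a)) = if IsFix d then 0 else monomial d a := by
  rw [sig_monomial, map_smul]
  unfold sigVal
  by_cases hfix : IsFix d
  · simp [hfix]
  · rw [if_neg hfix, if_neg hfix]
    rw [map_smul]
    have hsum : Finsupp.single (Quotient.mk (osetoid p r) d)
        (∑ g ∈ T d, MonoidAlgebra.single g (1 : k)) =
        ∑ g ∈ T d, Finsupp.single (Quotient.mk (osetoid p r) d) (MonoidAlgebra.single g (1 : k)) := by
      rw [Finsupp.single_finset_sum]
    rw [hsum, map_sum]
    have hterm : ∀ g ∈ T d, tau k ρB (Finsupp.single (Quotient.mk (osetoid p r) d)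
        (MonoidAlgebra.single g (1 : k))) = monomial d 1 := by
      intro g hg
      rw [tau_single, one_smul, rhoB_monomial k ρB hρ]
      have : (Quotient.mk (osetoid p r) d).out = rep d := rfl
      rw [this, mem_T.mp hg]
    rw [Finset.sum_congr rfl hterm, Finset.sum_const]
    have hcard : ((T d).card : k) ≠ 0 := T_card_ne_zero hfix k
    rw [smul_smul, ← Nat.cast_smul_eq_nsmul k, smul_smul, mul_assoc, inv_mul_cancel₀ hcard, mul_one,
      MvPolynomial.smul_monomial, smul_eq_mul, mul_one]

end Part2
end AffProof

namespace AffProof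
namespace Part2
open scoped Classical
open MvPolynomial

variable {p r : ℕ} [Fact p.Prime] (k : Type) [Field k]
variable (ρB : Representation k (affineGroup p) (MvPolynomial (ZMod p × Fin r) k))
set_option linter.unusedSectionVars false

lemma smul_comm_kG (a : k) (x : MonoidAlgebra k (affineGroup p))
    (φ : Q p r →₀ MonoidAlgebra k (affineGroup p)) :
    x • (a • φ) = a • (x • φ) := by
  refine Finsupp.ext fun q => ?_
  rw [Finsupp.smul_apply, Finsupp.smul_apply, Finsupp.smul_apply, Finsupp.smul_apply,
    smul_eq_mul, smul_eq_mul, mul_smul_comm]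

lemma sigVal_smul (g : affineGroup p) (d : S p r) :
    sigVal k (g • d) = MonoidAlgebra.single g (1 : k) • sigVal k d := by
  by_cases hfix : IsFix d
  · rw [hfix g]
    unfold sigVal
    rw [if_pos hfix, smul_zero]
  · have hfix' : ¬ IsFix (g • d) := fun h => hfix ((isFix_smul_iff g d).mp h)
    unfold sigVal
    rw [if_neg hfix, if_neg hfix']
    have hq : Quotient.mk (osetoid p r) (g • d) = Quotient.mk (osetoid p r) d :=
      Quotient.sound (MulAction.orbitRel_apply.mpr (MulAction.mem_orbit d g))
    have hcard : (T (g • d)).card = (T d).card := by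
      rw [T_smul, Finset.card_image_of_injective _ (mul_right_injective g)]
    have hsumeq : (∑ g' ∈ T (g • d), MonoidAlgebra.single g' (1 : k)) =
        MonoidAlgebra.single g (1 : k) * ∑ g'' ∈ T d, MonoidAlgebra.single g'' (1 : k) := by
      rw [T_smul, Finset.sum_image (fun a _ b _ h => mul_right_injective g h), Finset.mul_sum]
      apply Finset.sum_congr rfl
      intro g'' _
      rw [MonoidAlgebra.single_mul_single, one_mul]
    rw [hq, hcard, hsumeq]
    rw [Finsupp.smul_single, Finsupp.smul_single, Finsupp.smul_single]
    congr 1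
    rw [smul_eq_mul, mul_smul_comm]

lemma sig_equivariant
    (hρ : ∀ g : affineGroup p, ρB g =
      (MvPolynomial.rename
        (fun q : ZMod p × Fin r => ((g : Equiv.Perm (ZMod p)) q.1, q.2))).toLinearMap)
    (g : affineGroup p) (f : MvPolynomial (ZMod p × Fin r) k) :
    sig k (ρB g f) = MonoidAlgebra.single g (1 : k) • sig k f := by
  induction f using MvPolynomial.induction_on' with
  | monomial d a =>
    rw [rhoB_monomial k ρB hρ, sig_monomial, sig_monomial, sigVal_smul, smul_comm_kG]
  | add f₁ f₂ h₁ h₂ =>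
    rw [map_add, map_add, map_add, h₁, h₂, smul_add]

lemma tau_equivariant (g : affineGroup p) (φ : Q p r →₀ MonoidAlgebra k (affineGroup p)) :
    tau k ρB (MonoidAlgebra.single g (1 : k) • φ) = ρB g (tau k ρB φ) := by
  induction φ using Finsupp.induction_linear with
  | zero => rw [smul_zero, map_zero, map_zero]
  | add φ₁ φ₂ h₁ h₂ => rw [smul_add, map_add, map_add, h₁, h₂, map_add]
  | single o x =>
    induction x using MonoidAlgebra.induction_on with
    | of h =>
      rw [MonoidAlgebra.of_apply, Finsupp.smul_single]
      have hmul : MonoidAlgebra.single g (1 : k) • MonoidAlgebra.single h (1 : k)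
          = MonoidAlgebra.single (g * h) (1 : k) := by
        show MonoidAlgebra.single g (1 : k) * MonoidAlgebra.single h 1 = _
        rw [MonoidAlgebra.single_mul_single, one_mul]
      rw [hmul, tau_single, tau_single, map_mul, one_smul, one_smul, Module.End.mul_apply]
    | add x y hx hy =>
      rw [Finsupp.single_add, smul_add, map_add, hx, hy, ← map_add, ← map_add,
        ← Finsupp.single_add]
    | smul c x hx =>
      rw [← Finsupp.smul_single, smul_comm_kG, map_smul, hx, ← map_smul, ← map_smul,
        Finsupp.smul_single]

end Part2
end AffProof

namespace AffProof
namespace Part2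
open scoped Classical
open MvPolynomial

variable {p r : ℕ} [Fact p.Prime] (k : Type) [Field k]
set_option linter.unusedSectionVars false

lemma projective_of_summand {V : Type} [AddCommGroup V] [Module k V]
    (ρ : Representation k (affineGroup p) V)
    (sM : V →ₗ[k] (Q p r →₀ MonoidAlgebra k (affineGroup p)))
    (hs : ∀ (g : affineGroup p) (v : V), sM (ρ g v) = MonoidAlgebra.single g (1 : k) • sM v)
    (tM : (Q p r →₀ MonoidAlgebra k (affineGroup p)) →ₗ[k] V)
    (ht : ∀ (g : affineGroup p) (φ : Q p r →₀ MonoidAlgebra k (affineGroup p)),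
      tM (MonoidAlgebra.single g (1 : k) • φ) = ρ g (tM φ))
    (hts : ∀ v, tM (sM v) = v) :
    Module.Projective (MonoidAlgebra k (affineGroup p)) ρ.asModule := by
  have key : ∀ (x : MonoidAlgebra k (affineGroup p)) (v : V),
      sM (ρ.asAlgebraHom x v) = x • sM v := by
    intro x
    induction x using MonoidAlgebra.induction_on with
    | of g =>
      intro v
      rw [Representation.asAlgebraHom_of, hs, MonoidAlgebra.of_apply]
    | add x y hx hy =>
      intro v
      rw [map_add, LinearMap.add_apply, map_add, hx, hy, add_smul]
    | smul c x hx =>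
      intro v
      rw [map_smul, LinearMap.smul_apply, map_smul, hx, smul_assoc]
  have key2 : ∀ (x : MonoidAlgebra k (affineGroup p))
      (φ : Q p r →₀ MonoidAlgebra k (affineGroup p)),
      tM (x • φ) = ρ.asAlgebraHom x (tM φ) := by
    intro x
    induction x using MonoidAlgebra.induction_on with
    | of g =>
      intro φ
      rw [Representation.asAlgebraHom_of, MonoidAlgebra.of_apply, ht]
    | add x y hx hy =>
      intro φ
      rw [add_smul, map_add, hx, hy, map_add, LinearMap.add_apply]
    | smul c x hx =>
      intro φ
      rw [smul_assoc, map_smul, hx, map_smul, LinearMap.smul_apply]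
  let σM : ρ.asModule →ₗ[MonoidAlgebra k (affineGroup p)]
      (Q p r →₀ MonoidAlgebra k (affineGroup p)) :=
    { toFun := fun v => sM (ρ.asModuleEquiv v)
      map_add' := fun v w => by
        show sM (ρ.asModuleEquiv (v + w)) = sM (ρ.asModuleEquiv v) + sM (ρ.asModuleEquiv w)
        rw [map_add, map_add]
      map_smul' := fun x v => by
        show sM (ρ.asModuleEquiv (x • v)) = x • sM (ρ.asModuleEquiv v)
        rw [Representation.asModuleEquiv_map_smul, key] }
  let τM : (Q p r →₀ MonoidAlgebra k (affineGroup p)) →ₗ[MonoidAlgebra k (affineGroup p)]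
      ρ.asModule :=
    { toFun := fun φ => ρ.asModuleEquiv.symm (tM φ)
      map_add' := fun φ ψ => by
        show ρ.asModuleEquiv.symm (tM (φ + ψ)) = ρ.asModuleEquiv.symm (tM φ) + ρ.asModuleEquiv.symm (tM ψ)
        rw [map_add, map_add]
      map_smul' := fun x φ => by
        show ρ.asModuleEquiv.symm (tM (x • φ)) = x • ρ.asModuleEquiv.symm (tM φ)
        rw [key2]
        apply ρ.asModuleEquiv.injective
        rw [Representation.asModuleEquiv_map_smul, LinearEquiv.apply_symm_apply,
          LinearEquiv.apply_symm_apply] }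
  exact Module.Projective.of_split σM τM (by
    ext v
    show ρ.asModuleEquiv.symm (tM (sM (ρ.asModuleEquiv v))) = v
    rw [hts]
    exact ρ.asModuleEquiv.symm_apply_apply v)

end Part2
end AffProof


open MvPolynomial
open AffProof AffProof.Part2

/-- Let `p` be an odd prime, `r ≥ 1`, `k` an algebraically closed field of
characteristic `p`, and let the affine group `G = {x ↦ ax + b} ⊆ Perm(Z/pZ)` act on
the polynomial ring `B = k[w_{x,j} : x ∈ Z/pZ, 1 ≤ j ≤ r]` by permuting the first
index of the variables.  If `M` is a finite-dimensional indecomposable `kG`-module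
which occurs as a `kG`-module direct summand of `B` and is not projective over `kG`,
then `M` is isomorphic to the one-dimensional trivial representation `k`. -/
theorem nonprojective_summand_of_B_is_trivial
    (p : ℕ) [Fact p.Prime] (hodd : p ≠ 2)
    (r : ℕ) (hr : 1 ≤ r)
    (k : Type) [Field k] [IsAlgClosed k] [CharP k p]
    (ρB : Representation k (affineGroup p) (MvPolynomial (ZMod p × Fin r) k))
    (hρ : ∀ g : affineGroup p, ρB g =
      (MvPolynomial.rename
        (fun q : ZMod p × Fin r => ((g : Equiv.Perm (ZMod p)) q.1, q.2))).toLinearMap)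
    (M : Type) [AddCommGroup M] [Module k M]
    (ρM : Representation k (affineGroup p) M)
    (hfin : FiniteDimensional k M)
    (hnontriv : Nontrivial M)
    (hindec : ∀ X Y : Submodule k M,
      (∀ (g : affineGroup p), ∀ m ∈ X, ρM g m ∈ X) →
      (∀ (g : affineGroup p), ∀ m ∈ Y, ρM g m ∈ Y) → IsCompl X Y → X = ⊥ ∨ Y = ⊥)
    (hsummand : ∃ (ι : M →ₗ[k] MvPolynomial (ZMod p × Fin r) k)
        (π : MvPolynomial (ZMod p × Fin r) k →ₗ[k] M),
      (∀ g m, ι (ρM g m) = ρB g (ι m)) ∧ (∀ g f, π (ρB g f) = ρM g (π f)) ∧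
      π ∘ₗ ι = LinearMap.id)
    (hnotproj : ¬ Module.Projective (MonoidAlgebra k (affineGroup p)) ρM.asModule) :
    ∃ e : M ≃ₗ[k] k, ∀ (g : affineGroup p) (m : M), e (ρM g m) = e m := by
  classical
  obtain ⟨ι, π, hι, hπ, hπι⟩ := hsummand
  have hπιa : ∀ m : M, π (ι m) = m := by
    intro m
    have := LinearMap.congr_fun hπι m
    simpa using this
  let e2 : MvPolynomial (ZMod p × Fin r) k →ₗ[k] MvPolynomial (ZMod p × Fin r) k :=
    (tau k ρB) ∘ₗ (sig k)
  have he2a : ∀ f, e2 f = tau k ρB (sig k f) := fun f => rfl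
  have he2 : ∀ (g : affineGroup p) f, e2 (ρB g f) = ρB g (e2 f) := by
    intro g f
    rw [he2a, he2a, sig_equivariant k ρB hρ, tau_equivariant]
  have he1 : ∀ (g : affineGroup p) f, ρB g (f - e2 f) = f - e2 f := by
    intro g f
    induction f using MvPolynomial.induction_on' with
    | monomial d a =>
      have he2m : e2 (MvPolynomial.monomial d a) =
          if IsFix d then 0 else MvPolynomial.monomial d a := tau_sig_monomial k ρB hρ d a
      by_cases hfix : IsFix d
      · rw [he2m, if_pos hfix, sub_zero, rhoB_monomial k ρB hρ, hfix g]
      · rw [he2m, if_neg hfix, sub_self, map_zero]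
    | add f₁ f₂ h₁ h₂ =>
      rw [map_add, add_sub_add_comm, map_add, h₁, h₂]
  let b : M →ₗ[k] M := π ∘ₗ e2 ∘ₗ ι
  have hba : ∀ m, b m = π (e2 (ι m)) := fun m => rfl
  have hb : ∀ (g : affineGroup p) m, b (ρM g m) = ρM g (b m) := by
    intro g m
    rw [hba, hba, hι, he2, hπ]
  haveI := hfin
  obtain ⟨n, hn1, hcompl⟩ :
      ∃ n, 1 ≤ n ∧ IsCompl (LinearMap.ker (b ^ n)) (LinearMap.range (b ^ n)) := by
    obtain ⟨n, hn⟩ :=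
      Filter.eventually_atTop.mp (LinearMap.eventually_isCompl_ker_pow_range_pow b)
    exact ⟨max n 1, le_max_right _ _, hn _ (le_max_left _ _)⟩
  have hbn : ∀ (j : ℕ) (g : affineGroup p) m, (b ^ j) (ρM g m) = ρM g ((b ^ j) m) := by
    intro j
    induction j with
    | zero => intro g m; simp
    | succ i ih =>
      intro g m
      rw [pow_succ, Module.End.mul_apply, Module.End.mul_apply, hb, ih]
  have hker_inv : ∀ (g : affineGroup p), ∀ m ∈ LinearMap.ker (b ^ n),
      ρM g m ∈ LinearMap.ker (b ^ n) := by
    intro g m hm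
    rw [LinearMap.mem_ker] at hm ⊢
    rw [hbn, hm, map_zero]
  have hrange_inv : ∀ (g : affineGroup p), ∀ m ∈ LinearMap.range (b ^ n),
      ρM g m ∈ LinearMap.range (b ^ n) := by
    rintro g m ⟨x, rfl⟩
    exact ⟨ρM g x, hbn n g x⟩
  rcases hindec _ _ hker_inv hrange_inv hcompl with hker | hrange
  · -- kernel trivial: b is bijective, M is projective, contradiction
    exfalso
    have hinj : Function.Injective b := by
      rw [← LinearMap.ker_eq_bot, eq_bot_iff]
      intro x hx
      rw [LinearMap.mem_ker] at hx
      have hmem : x ∈ LinearMap.ker (b ^ n) := by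
        rw [LinearMap.mem_ker]
        obtain ⟨m', hm'⟩ := Nat.exists_eq_add_of_le hn1
        rw [hm', add_comm, pow_succ, Module.End.mul_apply, hx, map_zero]
      rw [hker] at hmem
      exact hmem
    have hsurj := LinearMap.injective_iff_surjective.mp hinj
    let beq := LinearEquiv.ofBijective b ⟨hinj, hsurj⟩
    have hbeq : ∀ y, b (beq.symm y) = y := fun y => beq.apply_symm_apply y
    have hbinv : ∀ (g : affineGroup p) y, beq.symm (ρM g y) = ρM g (beq.symm y) := by
      intro g y
      apply hinj
      rw [hbeq, hb, hbeq]
    apply hnotproj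
    apply projective_of_summand k ρM ((sig k) ∘ₗ ι) ?_
      (beq.symm.toLinearMap ∘ₗ π ∘ₗ (tau k ρB)) ?_ ?_
    · intro g v
      show sig k (ι (ρM g v)) = _
      rw [hι, sig_equivariant k ρB hρ]
      rfl
    · intro g φ
      show beq.symm (π (tau k ρB (MonoidAlgebra.single g 1 • φ))) = _
      rw [tau_equivariant, hπ, hbinv]
      rfl
    · intro v
      show beq.symm (π (tau k ρB (sig k (ι v)))) = v
      have h4 : π (tau k ρB (sig k (ι v))) = b v := rfl
      rw [h4]
      exact beq.symm_apply_apply v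
  · -- range trivial: b nilpotent, the action is trivial
    have hbn0 : (b ^ n) = 0 := LinearMap.range_eq_bot.mp hrange
    have htriv : ∀ (g : affineGroup p) (m : M), ρM g m = m := by
      intro g
      have hnil : IsNilpotent b := ⟨n, hbn0⟩
      obtain ⟨u, hu⟩ := hnil.isUnit_one_sub
      have hc : ∀ m, (1 - b) ((ρM g) m) = (1 - b) m := by
        intro m
        show ρM g m - b (ρM g m) = m - b m
        have h1 : ρM g m = π (ρB g (ι m)) := by rw [hπ, hπιa]
        have h2 : b (ρM g m) = π (e2 (ρB g (ι m))) := by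
          rw [hba, hι]
        have h3 : ρM g m - b (ρM g m) = π ((ρB g) (ι m) - e2 ((ρB g) (ι m))) := by
          rw [map_sub, ← h1, ← h2]
        have h4 : (ρB g) (ι m) - e2 ((ρB g) (ι m)) = (ρB g) (ι m - e2 (ι m)) := by
          rw [map_sub, he2]
        rw [h3, h4, he1, map_sub, hπιa, hba]
      have hend : (↑u * (ρM g) : M →ₗ[k] M) = ↑u := by
        rw [hu]
        exact LinearMap.ext hc
      have hone : (ρM g : M →ₗ[k] M) = 1 := by
        have h4 : (↑u⁻¹ : M →ₗ[k] M) * (↑u * ρM g) = ↑u⁻¹ * ↑u := by rw [hend]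
        rwa [← mul_assoc, Units.inv_mul, one_mul] at h4
      intro m
      have := LinearMap.congr_fun hone m
      simpa using this
    obtain ⟨m₀, hm₀⟩ := exists_ne (0 : M)
    obtain ⟨Y, hY⟩ := Submodule.exists_isCompl (Submodule.span k {m₀})
    have hXinv : ∀ (g : affineGroup p), ∀ m ∈ Submodule.span k {m₀},
        ρM g m ∈ Submodule.span k {m₀} := by
      intro g m hm; rw [htriv]; exact hm
    have hYinv : ∀ (g : affineGroup p), ∀ m ∈ Y, ρM g m ∈ Y := by
      intro g m hm; rw [htriv]; exact hm
    rcases hindec _ _ hXinv hYinv hY with hX | hYb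
    · exact absurd (Submodule.span_singleton_eq_bot.mp hX) hm₀
    · have htop : Submodule.span k {m₀} = ⊤ := by
        have hcod := codisjoint_iff.mp hY.codisjoint
        rwa [hYb, sup_bot_eq] at hcod
      have hinj : Function.Injective (LinearMap.toSpanSingleton k M m₀) := by
        intro c c' hcc
        by_contra hne
        have : (c - c') • m₀ = 0 := by
          rw [sub_smul]
          rw [show (LinearMap.toSpanSingleton k M m₀) c = c • m₀ from rfl,
            show (LinearMap.toSpanSingleton k M m₀) c' = c' • m₀ from rfl] at hcc
          rw [hcc, sub_self]
        rcases smul_eq_zero.mp this with h | h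
        · exact hne (sub_eq_zero.mp h)
        · exact hm₀ h
      have hsurj : Function.Surjective (LinearMap.toSpanSingleton k M m₀) := by
        rw [← LinearMap.range_eq_top, ← LinearMap.span_singleton_eq_range]
        exact htop
      refine ⟨(LinearEquiv.ofBijective (LinearMap.toSpanSingleton k M m₀)
        ⟨hinj, hsurj⟩).symm, fun g m => by rw [htriv]⟩
end

section
/- Let k be a field, n ≥ 2 a natural number, and σ a permutation of an n-element set acting on the vector space k^n by permuting coordinates (equivalently, acting by the permutation matrix A_σ). Then rank(A_σ − I) = 1 if and only if σ is a transposition. In other words, a permutation acting on k^n by a permutation matrix is a pseudo-reflection if and only if it is a transposition. -/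
open Module Submodule

/-- A permutation `σ` of an `n`-element set (`n ≥ 2`) acting on `k^n` by the
permutation matrix `A_σ` (sending the `i`-th standard basis vector to the
`σ(i)`-th one, i.e. `(A_σ v) j = v (σ⁻¹ j)`) is a pseudo-reflection, i.e.
`rank (A_σ − I) = 1`, if and only if `σ` is a transposition. -/
theorem perm_pseudoReflection_iff_isSwap
    (k : Type*) [Field k] (n : ℕ) (hn : 2 ≤ n) (σ : Equiv.Perm (Fin n)) :
    LinearMap.rank ((LinearMap.funLeft k k ⇑σ⁻¹) - LinearMap.id) = 1 ↔
      σ.IsSwap := by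
  set f : (Fin n → k) →ₗ[k] (Fin n → k) :=
    (LinearMap.funLeft k k ⇑σ⁻¹) - LinearMap.id with hf
  have hfapp : ∀ (v : Fin n → k) (j : Fin n), f v j = v (σ⁻¹ j) - v j := by
    intro v j; simp [hf, LinearMap.funLeft_apply]
  have hsingle : ∀ i : Fin n,
      f (Pi.single i 1) = Pi.single (σ i) 1 - Pi.single i 1 := by
    intro i
    funext j
    rw [hfapp]
    simp only [Pi.sub_apply, Pi.single_apply]
    have : σ⁻¹ j = i ↔ j = σ i := by
      constructor
      · rintro rfl; simp
      · rintro rfl; simp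
    by_cases h1 : j = σ i
    · simp [this, h1]
    · simp [this, h1]; exact fun hh => h1 (this.mp hh)
  -- express LinearMap.rank via finrank
  have hrank : LinearMap.rank f = (finrank k ↥(LinearMap.range f) : Cardinal) := by
    rw [LinearMap.rank, finrank_eq_rank]
  have hcast : LinearMap.rank f = 1 ↔ finrank k ↥(LinearMap.range f) = 1 := by
    rw [hrank]
    exact_mod_cast Iff.rfl
  rw [hcast]
  constructor
  · intro h
    -- σ ≠ 1
    have hσ1 : σ ≠ 1 := by
      rintro rfl
      have h0 : f = 0 := LinearMap.ext fun v => funext fun j => by rw [hfapp]; simp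
      rw [h0, LinearMap.range_zero] at h
      simp [finrank_bot] at h
    by_contra hns
    -- support has at least 3 elements
    have hcard2 : σ.support.card ≠ 2 := fun hc => hns (Equiv.Perm.card_support_eq_two.mp hc)
    have hcard0 : σ.support.card ≠ 0 := fun hc =>
      hσ1 (Equiv.Perm.support_eq_empty_iff.mp (Finset.card_eq_zero.mp hc))
    have hcard1 : σ.support.card ≠ 1 := Equiv.Perm.card_support_ne_one σ
    have hcard3 : 3 ≤ σ.support.card := by omega
    obtain ⟨x, hx⟩ : σ.support.Nonempty := Finset.card_pos.mp (by omega)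
    have hσx : σ x ≠ x := Equiv.Perm.mem_support.mp hx
    obtain ⟨y, hy, hyx⟩ : ∃ y ∈ σ.support, y ∉ ({x, σ x} : Finset (Fin n)) := by
      by_contra hc
      push_neg at hc
      have hsub : σ.support ⊆ {x, σ x} := hc
      have := Finset.card_le_card hsub
      have h2 : ({x, σ x} : Finset (Fin n)).card ≤ 2 :=
        (Finset.card_insert_le _ _).trans (by simp)
      omega
    simp only [Finset.mem_insert, Finset.mem_singleton, not_or] at hyx
    obtain ⟨hyx1, hyx2⟩ := hyx
    have hσy : σ y ≠ y := Equiv.Perm.mem_support.mp hy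
    set u : Fin n → k := Pi.single (σ x) 1 - Pi.single x 1 with hu
    set w : Fin n → k := Pi.single (σ y) 1 - Pi.single y 1 with hw
    have hli : LinearIndependent k ![u, w] := by
      rw [LinearIndependent.pair_iff]
      intro s t hst
      have hy' := congrFun hst y
      simp only [Pi.add_apply, Pi.smul_apply, Pi.sub_apply, Pi.single_apply,
        Pi.zero_apply, smul_eq_mul, hu, hw] at hy'
      rw [if_neg hyx2, if_neg hyx1, if_neg (fun hh : y = σ y => hσy hh.symm),
        if_pos trivial] at hy'
      have ht : t = 0 := by
        have := hy'; ring_nf at this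
        simpa using this
      subst ht
      have hx' := congrFun hst (σ x)
      simp only [Pi.add_apply, Pi.smul_apply, Pi.sub_apply, Pi.single_apply,
        Pi.zero_apply, smul_eq_mul, hu, hw] at hx'
      have hσxy : ¬ σ x = σ y := fun hh => hyx1 (σ.injective hh).symm
      rw [if_pos trivial, if_neg (fun hh : σ x = x => hσx hh), if_neg hσxy,
        if_neg (fun hh : σ x = y => hyx2 hh.symm)] at hx'
      refine ⟨?_, rfl⟩
      have := hx'; ring_nf at this
      simpa using this
    have hspan : span k (Set.range ![u, w]) ≤ LinearMap.range f := by
      rw [span_le]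
      rintro v hv
      rcases hv with ⟨i, rfl⟩
      fin_cases i
      · exact ⟨Pi.single x 1, (hsingle x)⟩
      · exact ⟨Pi.single y 1, (hsingle y)⟩
    have h2 : 2 ≤ finrank k ↥(LinearMap.range f) := by
      have := Submodule.finrank_mono hspan
      rwa [finrank_span_eq_card hli, Fintype.card_fin] at this
    omega
  · rintro ⟨x, y, hxy, rfl⟩
    set w : Fin n → k := Pi.single y 1 - Pi.single x 1 with hw
    have hwne : w ≠ 0 := by
      intro hc
      have := congrFun hc y
      simp [hw, Pi.single_apply, if_neg (Ne.symm hxy)] at this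
    have hrange : LinearMap.range f = span k {w} := by
      apply le_antisymm
      · rintro v ⟨v', rfl⟩
        have : f v' = (v' x - v' y) • w := by
          funext j
          rw [hfapp]
          simp only [hw, Pi.smul_apply, Pi.sub_apply, Pi.single_apply, smul_eq_mul]
          rw [Equiv.Perm.inv_def, Equiv.symm_swap]
          by_cases h1 : j = x
          · subst h1
            rw [if_neg hxy, if_pos rfl, Equiv.swap_apply_left]
            ring
          · by_cases h2 : j = y
            · subst h2
              rw [if_pos rfl, if_neg (Ne.symm hxy), Equiv.swap_apply_right]
              ring
            · rw [if_neg h2, if_neg h1, Equiv.swap_apply_of_ne_of_ne h1 h2]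
              ring
        rw [this]
        exact smul_mem _ _ (mem_span_singleton_self w)
      · rw [span_le, Set.singleton_subset_iff]
        refine ⟨Pi.single x 1, ?_⟩
        rw [hsingle x, Equiv.swap_apply_left]
    rw [hrange]
    exact finrank_span_singleton hwne
end
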